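/- arXiv:1104.5576 — 6 statements merged into one kernel-verified Lean document; each statement's English description precedes it below -/
import Mathlib

section
/- Let m > 1 and n be integers with gcd(n, m) = 1, and let α ∈ ℂ satisfy α^m = 1. Let n̄ be the unique integer with 0 ≤ n̄ < m such that α = exp(2πi·n·n̄/m). Then μ_α(n) := −∑_{β=1}^{m−1} α^{−β}/(1 − exp(2πi·n·β/m)) equals n̄ − (m−1)/2. -/
open Complex

/-- Polynomial identity: `(z-1) * ∑ j<M, j z^j = (M-1) z^M - ∑ j<M, z^j + 1`. -/
lemma mu_poly_id (z : ℂ) : ∀ M : ℕ, (z - 1) * ∑ j ∈ Finset.range M, (j : ℂ) * z ^ j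
    = ((M : ℂ) - 1) * z ^ M - (∑ j ∈ Finset.range M, z ^ j) + 1 := by
  intro M
  induction M with
  | zero => simp
  | succ M ih =>
      rw [Finset.sum_range_succ, Finset.sum_range_succ, mul_add, ih]
      push_cast
      ring

/-- For a nontrivial `M`-th root of unity `z`, `1/(1-z) = -(1/M) ∑ j<M, j z^j`. -/
lemma mu_inv_one_sub (z : ℂ) (M : ℕ) (hM : M ≠ 0) (hz1 : z ≠ 1) (hzM : z ^ M = 1) :
    1 / (1 - z) = -(1 / (M : ℂ)) * ∑ j ∈ Finset.range M, (j : ℂ) * z ^ j := by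
  have hgeom : (∑ j ∈ Finset.range M, z ^ j) = 0 := by
    rw [geom_sum_eq hz1, hzM, sub_self, zero_div]
  have h := mu_poly_id z M
  rw [hgeom, hzM] at h
  have hMne : (M : ℂ) ≠ 0 := Nat.cast_ne_zero.mpr hM
  have hz1' : (1 : ℂ) - z ≠ 0 := fun h' => hz1 (by linear_combination -h')
  have h' : (z - 1) * ∑ j ∈ Finset.range M, (j : ℂ) * z ^ j = (M : ℂ) := by
    rw [h]; ring
  field_simp
  linear_combination -h'

/-- The Claim in Section 5: for `m > 1`, `gcd(n,m) = 1`, `α` an `m`-th root of unity, and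
`n̄` the unique integer with `0 ≤ n̄ < m` and `α = exp(2πi n n̄ / m)`, the quantity
`μ_α(n) = -∑_{β=1}^{m-1} α^{-β} / (1 - exp(2πi n β / m))` equals `n̄ - (m-1)/2`. -/
theorem mu_alpha_eq (m : ℕ) (hm : 1 < m) (n : ℤ) (hnm : Int.gcd n (m : ℤ) = 1)
    (α : ℂ) (hα : α ^ m = 1) (nbar : ℕ) (hnbar : nbar < m)
    (hαeq : α = Complex.exp (2 * Real.pi * Complex.I * (n : ℂ) * (nbar : ℂ) / (m : ℂ))) :
    -∑ β ∈ Finset.Ico 1 m,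
        α ^ (-(β : ℤ)) / (1 - Complex.exp (2 * Real.pi * Complex.I * (n : ℂ) * (β : ℂ) / (m : ℂ)))
      = (nbar : ℂ) - ((m : ℂ) - 1) / 2 := by
  have hm0 : (m : ℂ) ≠ 0 := Nat.cast_ne_zero.mpr (by omega)
  have hm0' : m ≠ 0 := by omega
  have h2pi : (2 : ℂ) * Real.pi * I ≠ 0 := by
    simp [Real.pi_ne_zero, I_ne_zero]
  set ζ : ℂ := Complex.exp (2 * Real.pi * Complex.I * (n : ℂ) / (m : ℂ)) with hζdef
  have hζ0 : ζ ≠ 0 := Complex.exp_ne_zero _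
  -- exp of the scaled angle is a zpow of ζ
  have hz : ∀ d : ℤ, Complex.exp (2 * Real.pi * Complex.I * (n : ℂ) * (d : ℂ) / (m : ℂ)) = ζ ^ d := by
    intro d
    rw [hζdef, ← Complex.exp_int_mul]
    congr 1
    field_simp
  have hzn : ∀ β : ℕ, Complex.exp (2 * Real.pi * Complex.I * (n : ℂ) * (β : ℂ) / (m : ℂ))
      = ζ ^ (β : ℤ) := fun β => by simpa using hz (β : ℤ)
  -- primitivity: ζ^d = 1 ↔ m ∣ d
  have hζ1 : ∀ d : ℤ, ζ ^ d = 1 ↔ (m : ℤ) ∣ d := by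
    intro d
    rw [← hz d, Complex.exp_eq_one_iff]
    constructor
    · rintro ⟨k, hk⟩
      have hnd : ((n * d : ℤ) : ℂ) = ((k * m : ℤ) : ℂ) := by
        apply mul_left_cancel₀ h2pi
        push_cast
        field_simp at hk
        linear_combination (2 * (Real.pi : ℂ) * I) * hk
      have hnd' : n * d = k * m := by exact_mod_cast hnd
      have hdvd : (m : ℤ) ∣ n * d := ⟨k, by linarith⟩
      have hcop : IsCoprime (m : ℤ) n := by
        rw [Int.isCoprime_iff_gcd_eq_one, Int.gcd_comm]
        exact hnm
      exact hcop.dvd_of_dvd_mul_left hdvd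
    · rintro ⟨k, rfl⟩
      refine ⟨n * k, ?_⟩
      push_cast
      field_simp
  -- powers of zpows of ζ are again m-th roots of unity
  have hζdm : ∀ d : ℤ, (ζ ^ d) ^ m = 1 := by
    intro d
    rw [← zpow_natCast (ζ ^ d) m, ← zpow_mul]
    exact (hζ1 _).mpr ⟨d, by ring⟩
  -- rewrite the terms of the sum
  have hα' : α = ζ ^ (nbar : ℤ) := by rw [hαeq, hzn nbar]
  have key : ∀ β ∈ Finset.Ico 1 m,
      α ^ (-(β : ℤ)) / (1 - Complex.exp (2 * Real.pi * Complex.I * (n : ℂ) * (β : ℂ) / (m : ℂ)))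
      = ∑ j ∈ Finset.range m, -(1 / (m : ℂ)) * (j : ℂ) * ζ ^ (((j : ℤ) - (nbar : ℤ)) * (β : ℤ)) := by
    intro β hβ
    simp only [Finset.mem_Ico] at hβ
    have hζβ1 : ζ ^ (β : ℤ) ≠ 1 := by
      intro h1
      have hd := (hζ1 _).mp h1
      have h0 : (0 : ℤ) < (β : ℤ) := by exact_mod_cast hβ.1
      have := Int.le_of_dvd h0 hd
      omega
    rw [hzn β, hα', div_eq_mul_one_div,
      mu_inv_one_sub (ζ ^ (β : ℤ)) m hm0' hζβ1 (hζdm (β : ℤ)),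
      Finset.mul_sum, Finset.mul_sum]
    refine Finset.sum_congr rfl fun j hj => ?_
    have e1 : (ζ ^ (β : ℤ)) ^ j = ζ ^ ((β : ℤ) * (j : ℤ)) := by
      rw [← zpow_natCast (ζ ^ (β : ℤ)) j, ← zpow_mul]
    have e2 : (ζ ^ (nbar : ℤ)) ^ (-(β : ℤ)) = ζ ^ (-((nbar : ℤ) * (β : ℤ))) := by
      rw [← zpow_mul]; congr 1; ring
    have e3 : ζ ^ (((j : ℤ) - (nbar : ℤ)) * (β : ℤ))
        = ζ ^ (-((nbar : ℤ) * (β : ℤ))) * ζ ^ ((β : ℤ) * (j : ℤ)) := by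
      rw [← zpow_add₀ hζ0]; congr 1; ring
    rw [e1, e2, e3]
    ring
  rw [Finset.sum_congr rfl key, Finset.sum_comm]
  -- inner geometric sums
  have inner : ∀ j ∈ Finset.range m,
      (∑ β ∈ Finset.Ico 1 m, -(1 / (m : ℂ)) * (j : ℂ) * ζ ^ (((j : ℤ) - (nbar : ℤ)) * (β : ℤ)))
      = -(1 / (m : ℂ)) * (j : ℂ) * ((if j = nbar then (m : ℂ) else 0) - 1) := by
    intro j hj
    simp only [Finset.mem_range] at hj
    have hmul : ∀ β ∈ Finset.Ico 1 m, -(1 / (m : ℂ)) * (j : ℂ) * ζ ^ (((j : ℤ) - (nbar : ℤ)) * (β : ℤ))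
        = -(1 / (m : ℂ)) * (j : ℂ) * (ζ ^ ((j : ℤ) - (nbar : ℤ))) ^ β := by
      intro β _
      rw [zpow_mul, zpow_natCast]
    rw [Finset.sum_congr rfl hmul, ← Finset.mul_sum]
    congr 1
    set d : ℤ := (j : ℤ) - (nbar : ℤ) with hd
    have hfull : (∑ β ∈ Finset.range m, (ζ ^ d) ^ β) = if j = nbar then (m : ℂ) else 0 := by
      by_cases hcase : j = nbar
      · subst hcase
        simp [hd, sub_self]
      · have hne : ζ ^ d ≠ 1 := by
          intro h1
          have hdvd := (hζ1 _).mp h1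
          have : d = 0 := Int.eq_zero_of_abs_lt_dvd hdvd (by rw [abs_lt]; omega)
          exact hcase (by omega)
        rw [geom_sum_eq hne, hζdm d, sub_self, zero_div, if_neg hcase]
    have hsplit0 : (∑ β ∈ Finset.range m, (ζ ^ d) ^ β)
        = 1 + ∑ β ∈ Finset.Ico 1 m, (ζ ^ d) ^ β := by
      rw [Finset.range_eq_Ico, Finset.sum_eq_sum_Ico_succ_bot (by omega : 0 < m), pow_zero]
    rw [hfull] at hsplit0
    linear_combination -hsplit0
  rw [Finset.sum_congr rfl inner]
  -- final arithmetic
  have hgauss : (∑ j ∈ Finset.range m, (j : ℂ)) = (m : ℂ) * ((m : ℂ) - 1) / 2 := by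
    have h := Finset.sum_range_id_mul_two m
    have h2 : ((∑ j ∈ Finset.range m, j : ℕ) : ℂ) * 2 = (m : ℂ) * ((m : ℂ) - 1) := by
      rw [← Nat.cast_ofNat, ← Nat.cast_mul, h]
      push_cast [Nat.cast_sub (by omega : 1 ≤ m)]
      ring
    push_cast at h2
    linear_combination h2 / 2
  have hsplit : (∑ j ∈ Finset.range m, -(1 / (m : ℂ)) * (j : ℂ) * ((if j = nbar then (m : ℂ) else 0) - 1))
      = -(1 / (m : ℂ)) * ((∑ j ∈ Finset.range m, (j : ℂ) * (if j = nbar then (m : ℂ) else 0))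
        - ∑ j ∈ Finset.range m, (j : ℂ)) := by
    rw [← Finset.sum_sub_distrib, Finset.mul_sum]
    exact Finset.sum_congr rfl fun j _ => by ring
  rw [hsplit]
  have hite : (∑ j ∈ Finset.range m, (j : ℂ) * (if j = nbar then (m : ℂ) else 0))
      = (nbar : ℂ) * (m : ℂ) := by
    have hstep : ∀ j ∈ Finset.range m, (j : ℂ) * (if j = nbar then (m : ℂ) else 0)
        = if j = nbar then (j : ℂ) * (m : ℂ) else 0 := fun j _ => by split <;> simp
    rw [Finset.sum_congr rfl hstep,
      Finset.sum_ite_eq' (Finset.range m) nbar (fun j => (j : ℂ) * (m : ℂ))]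
    simp [Finset.mem_range.mpr hnbar]
  rw [hite, hgauss]
  field_simp
end

section
/- Let Γ and G be groups, φ : Γ → Γ a group automorphism, and let Γ ⋊_φ ℤ denote the semidirect product of Γ by ℤ with respect to the homomorphism ℤ → Aut(Γ) sending 1 to φ; write γ = (1, 1) ∈ Γ ⋊_φ ℤ for the canonical generator, so that γ α γ⁻¹ = φ(α) for all α ∈ Γ. Let ρ : Γ → G be a homomorphism, Z_ρ the centralizer in G of ρ(Γ), and suppose there exists g ∈ G with g ρ(α) g⁻¹ = ρ(φ(α)) for all α ∈ Γ. Then conjugation by elements of Z_ρ preserves the left coset Z_ρ · g, and the set of G-conjugacy classes of homomorphisms ρ̃ : Γ ⋊_φ ℤ → G whose restriction to Γ is G-conjugate to ρ is in bijection with the set of orbits of this conjugation action of Z_ρ on Z_ρ · g. -/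
/-- The mapping torus group: the semidirect product `Γ ⋊_φ ℤ`, where `ℤ → Aut Γ` sends `1`
to the automorphism `φ`. -/
abbrev MappingTorusGroup (Γ : Type*) [Group Γ] (φ : MulAut Γ) :=
  Γ ⋊[zpowersHom (MulAut Γ) φ] Multiplicative ℤ

/-- The canonical generator `γ = (1,1)` of `Γ ⋊_φ ℤ`, satisfying `γ α γ⁻¹ = φ α`. -/
abbrev mtGen (Γ : Type*) [Group Γ] (φ : MulAut Γ) : MappingTorusGroup Γ φ :=
  SemidirectProduct.inr (Multiplicative.ofAdd 1)

section Aux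

variable {Γ G : Type*} [Group Γ] [Group G]

lemma memZ_iff (ρ : Γ →* G) {z : G} :
    z ∈ Subgroup.centralizer (Set.range ρ) ↔ ∀ a : Γ, z * ρ a * z⁻¹ = ρ a := by
  rw [Subgroup.mem_centralizer_iff]
  constructor
  · intro h a
    rw [← h (ρ a) ⟨a, rfl⟩]; group
  · intro h x hx
    obtain ⟨a, rfl⟩ := hx
    conv_lhs => rw [← h a]
    group

lemma rhoConjZpow (φ : MulAut Γ) (ρ : Γ →* G) {c : G}
    (hc : ∀ a : Γ, c * ρ a * c⁻¹ = ρ (φ a)) (n : ℤ) (a : Γ) :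
    c ^ n * ρ a * (c ^ n)⁻¹ = ρ ((φ ^ n) a) := by
  induction n using Int.induction_on generalizing a with
  | zero => simp
  | succ n ih =>
      have : (φ ^ ((n : ℤ) + 1)) a = (φ ^ (n : ℤ)) (φ a) := by
        rw [zpow_add, zpow_one]; rfl
      rw [this, ← ih (φ a), ← hc a, zpow_add, zpow_one]
      group
  | pred n ih =>
      have h1 : ∀ b : Γ, c⁻¹ * ρ b * c = ρ (φ⁻¹ b) := by
        intro b
        have := hc (φ⁻¹ b)
        simp only [MulAut.apply_inv_self] at this
        rw [← this]; group
      have : (φ ^ (-(n : ℤ) - 1)) a = (φ ^ (-(n : ℤ))) (φ⁻¹ a) := by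
        rw [sub_eq_add_neg, zpow_add, zpow_neg_one]; rfl
      rw [this, ← ih (φ⁻¹ a), ← h1 a, sub_eq_add_neg, zpow_add, zpow_neg_one]
      group

/-- The homomorphism `Γ ⋊_φ ℤ →* G` determined by `ρ` and a compatible element `c`. -/
noncomputable def mtHom (φ : MulAut Γ) (ρ : Γ →* G) (c : G)
    (hc : ∀ a : Γ, c * ρ a * c⁻¹ = ρ (φ a)) : MappingTorusGroup Γ φ →* G :=
  SemidirectProduct.lift ρ (zpowersHom G c) (by
    intro m
    ext a
    simp only [MonoidHom.comp_apply, MulEquiv.coe_toMonoidHom, MulAut.conj_apply,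
      zpowersHom_apply]
    exact (rhoConjZpow φ ρ hc (Multiplicative.toAdd m) a).symm)

@[simp] lemma mtHom_inl (φ : MulAut Γ) (ρ : Γ →* G) (c : G)
    (hc : ∀ a : Γ, c * ρ a * c⁻¹ = ρ (φ a)) (a : Γ) :
    mtHom φ ρ c hc (SemidirectProduct.inl a) = ρ a := by
  simp [mtHom]

@[simp] lemma mtHom_gen (φ : MulAut Γ) (ρ : Γ →* G) (c : G)
    (hc : ∀ a : Γ, c * ρ a * c⁻¹ = ρ (φ a)) :
    mtHom φ ρ c hc (mtGen Γ φ) = c := by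
  simp [mtHom, mtGen]

lemma mt_hom_ext {φ : MulAut Γ} {σ₁ σ₂ : MappingTorusGroup Γ φ →* G}
    (h1 : ∀ a : Γ, σ₁ (SemidirectProduct.inl a) = σ₂ (SemidirectProduct.inl a))
    (h2 : σ₁ (mtGen Γ φ) = σ₂ (mtGen Γ φ)) : σ₁ = σ₂ := by
  apply SemidirectProduct.hom_ext
  · ext a; exact h1 a
  · exact MonoidHom.ext_mint h2

lemma gen_conj (φ : MulAut Γ) (a : Γ) :
    mtGen Γ φ * SemidirectProduct.inl a * (mtGen Γ φ)⁻¹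
      = SemidirectProduct.inl (φ a) := by
  have h := SemidirectProduct.inl_aut (φ := zpowersHom (MulAut Γ) φ)
    (Multiplicative.ofAdd 1) a
  rw [map_inv] at h
  rw [← h]
  simp

end Aux

/-- Section 7 of the paper, `r⁻¹([ρ]) ≅ Z_ρ g / Z_ρ`: the conjugation action of the
centralizer `Z_ρ` preserves the coset `Z_ρ · g`, and the set of `G`-conjugacy classes of
homomorphisms `Γ ⋊_φ ℤ → G` whose restriction to `Γ` is `G`-conjugate to `ρ` is in bijection
with the set of orbits of this conjugation action of `Z_ρ` on `Z_ρ · g`. -/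
theorem fiber_of_restriction_eq_coset_mod_conjugation {Γ G : Type*} [Group Γ] [Group G]
    (φ : MulAut Γ) (ρ : Γ →* G) (g : G)
    (hg : ∀ a : Γ, g * ρ a * g⁻¹ = ρ (φ a)) :
    (∀ z ∈ Subgroup.centralizer (Set.range ρ),
        ∀ c ∈ (fun z' : G => z' * g) '' (Subgroup.centralizer (Set.range ρ) : Set G),
          z * c * z⁻¹ ∈ (fun z' : G => z' * g) '' (Subgroup.centralizer (Set.range ρ) : Set G))
    ∧ Nonempty
        (Quot (fun σ₁ σ₂ : {σ : MappingTorusGroup Γ φ →* G //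
              ∃ k : G, ∀ a : Γ, k * σ (SemidirectProduct.inl a) * k⁻¹ = ρ a} =>
            ∃ h : G, ∀ x : MappingTorusGroup Γ φ, h * σ₁.1 x * h⁻¹ = σ₂.1 x)
          ≃ Quot (fun c₁ c₂ : ((fun z' : G => z' * g) ''
              (Subgroup.centralizer (Set.range ρ) : Set G)) =>
            ∃ z ∈ Subgroup.centralizer (Set.range ρ), z * c₁.1 * z⁻¹ = c₂.1)) := by
  -- the centralizer as a set
  set Z := Subgroup.centralizer (Set.range ρ) with hZ
  have hginv : ∀ a : Γ, g⁻¹ * ρ a * g = ρ (φ⁻¹ a) := by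
    intro a
    have := hg (φ⁻¹ a)
    simp only [MulAut.apply_inv_self] at this
    rw [← this]; group
  -- elements of the coset conjugate ρ like g does
  have cosetConj : ∀ c ∈ (fun z' : G => z' * g) '' (Z : Set G),
      ∀ a : Γ, c * ρ a * c⁻¹ = ρ (φ a) := by
    rintro c ⟨z', hz', rfl⟩ a
    have hz'' := (memZ_iff ρ).1 hz' (φ a)
    calc z' * g * ρ a * (z' * g)⁻¹ = z' * (g * ρ a * g⁻¹) * z'⁻¹ := by group
    _ = z' * ρ (φ a) * z'⁻¹ := by rw [hg]
    _ = ρ (φ a) := hz''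
  -- conversely, anything conjugating ρ like g does lies in the coset
  have toCoset : ∀ c : G, (∀ a : Γ, c * ρ a * c⁻¹ = ρ (φ a)) →
      c ∈ (fun z' : G => z' * g) '' (Z : Set G) := by
    intro c hc
    refine ⟨c * g⁻¹, (memZ_iff ρ).2 fun a => ?_, by group⟩
    calc c * g⁻¹ * ρ a * (c * g⁻¹)⁻¹ = c * (g⁻¹ * ρ a * g) * c⁻¹ := by group
    _ = c * ρ (φ⁻¹ a) * c⁻¹ := by rw [hginv]
    _ = ρ (φ (φ⁻¹ a)) := hc _
    _ = ρ a := by simp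
  constructor
  · -- part 1
    intro z hz c hc
    apply toCoset
    intro a
    have h1 := cosetConj c hc a
    have h2 := (memZ_iff ρ).1 hz (φ a)
    have h3 := (memZ_iff ρ).1 hz a
    calc z * c * z⁻¹ * ρ a * (z * c * z⁻¹)⁻¹
        = z * (c * (z⁻¹ * ρ a * z) * c⁻¹) * z⁻¹ := by group
    _ = z * (c * ρ a * c⁻¹) * z⁻¹ := by
          have hz3 : z⁻¹ * ρ a * z = ρ a := by
            conv_lhs => rw [← h3]
            group
          rw [hz3]
    _ = z * ρ (φ a) * z⁻¹ := by rw [h1]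
    _ = ρ (φ a) := h2
  · -- part 2
    classical
    set A := {σ : MappingTorusGroup Γ φ →* G //
        ∃ k : G, ∀ a : Γ, k * σ (SemidirectProduct.inl a) * k⁻¹ = ρ a} with hA
    set B := ((fun z' : G => z' * g) '' (Z : Set G)) with hB
    set rA := fun σ₁ σ₂ : A =>
        ∃ h : G, ∀ x : MappingTorusGroup Γ φ, h * σ₁.1 x * h⁻¹ = σ₂.1 x with hrA
    set rB := fun c₁ c₂ : B => ∃ z ∈ Z, z * c₁.1 * z⁻¹ = c₂.1 with hrB
    -- the compatible element attached to σ ∈ A (with choice k)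
    have conj_of_mem : ∀ (σ : A) (k : G),
        (∀ a : Γ, k * σ.1 (SemidirectProduct.inl a) * k⁻¹ = ρ a) →
        ∀ a : Γ, (k * σ.1 (mtGen Γ φ) * k⁻¹) * ρ a * (k * σ.1 (mtGen Γ φ) * k⁻¹)⁻¹
          = ρ (φ a) := by
      intro σ k hk a
      have h1 : σ.1 (SemidirectProduct.inl a) = k⁻¹ * ρ a * k := by
        rw [← hk a]; group
      calc (k * σ.1 (mtGen Γ φ) * k⁻¹) * ρ a * (k * σ.1 (mtGen Γ φ) * k⁻¹)⁻¹
          = k * (σ.1 (mtGen Γ φ) * (k⁻¹ * ρ a * k) * (σ.1 (mtGen Γ φ))⁻¹) * k⁻¹ := by group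
      _ = k * (σ.1 (mtGen Γ φ) * σ.1 (SemidirectProduct.inl a) * (σ.1 (mtGen Γ φ))⁻¹) * k⁻¹ :=
            by rw [← h1]
      _ = k * σ.1 (mtGen Γ φ * SemidirectProduct.inl a * (mtGen Γ φ)⁻¹) * k⁻¹ := by
            simp [map_mul]
      _ = k * σ.1 (SemidirectProduct.inl (φ a)) * k⁻¹ := by rw [gen_conj]
      _ = ρ (φ a) := hk (φ a)
    -- map A → B
    have toBmem : ∀ σ : A, (σ.2.choose * σ.1 (mtGen Γ φ) * σ.2.choose⁻¹) ∈ B :=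
      fun σ => toCoset _ (conj_of_mem σ σ.2.choose σ.2.choose_spec)
    set toB : A → B := fun σ => ⟨_, toBmem σ⟩ with htoB
    -- map B → A
    set toA : B → A := fun c =>
      ⟨mtHom φ ρ c.1 (cosetConj c.1 c.2), 1, fun a => by simp⟩ with htoA
    -- toB respects rA
    have respB : ∀ σ₁ σ₂ : A, rA σ₁ σ₂ → rB (toB σ₁) (toB σ₂) := by
      rintro σ₁ σ₂ ⟨h, hh⟩
      have hk₁ := σ₁.2.choose_spec
      have hk₂ := σ₂.2.choose_spec
      set k₁ := σ₁.2.choose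
      set k₂ := σ₂.2.choose
      refine ⟨k₂ * h * k₁⁻¹, (memZ_iff ρ).2 fun a => ?_, ?_⟩
      · calc (k₂ * h * k₁⁻¹) * ρ a * (k₂ * h * k₁⁻¹)⁻¹
            = k₂ * (h * (k₁⁻¹ * ρ a * k₁) * h⁻¹) * k₂⁻¹ := by group
        _ = k₂ * (h * σ₁.1 (SemidirectProduct.inl a) * h⁻¹) * k₂⁻¹ := by
              rw [show k₁⁻¹ * ρ a * k₁ = σ₁.1 (SemidirectProduct.inl a) by
                rw [← hk₁ a]; group]
        _ = k₂ * σ₂.1 (SemidirectProduct.inl a) * k₂⁻¹ := by rw [hh]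
        _ = ρ a := hk₂ a
      · show (k₂ * h * k₁⁻¹) * (k₁ * σ₁.1 (mtGen Γ φ) * k₁⁻¹) * (k₂ * h * k₁⁻¹)⁻¹
            = k₂ * σ₂.1 (mtGen Γ φ) * k₂⁻¹
        calc (k₂ * h * k₁⁻¹) * (k₁ * σ₁.1 (mtGen Γ φ) * k₁⁻¹) * (k₂ * h * k₁⁻¹)⁻¹
            = k₂ * (h * σ₁.1 (mtGen Γ φ) * h⁻¹) * k₂⁻¹ := by group
        _ = k₂ * σ₂.1 (mtGen Γ φ) * k₂⁻¹ := by rw [hh]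
    -- toA respects rB
    have respA : ∀ c₁ c₂ : B, rB c₁ c₂ → rA (toA c₁) (toA c₂) := by
      rintro c₁ c₂ ⟨z, hz, hzc⟩
      refine ⟨z, fun x => ?_⟩
      have key : (MulAut.conj z).toMonoidHom.comp (toA c₁).1 = (toA c₂).1 := by
        apply mt_hom_ext
        · intro a
          simp only [MonoidHom.comp_apply, MulEquiv.coe_toMonoidHom, MulAut.conj_apply,
            htoA, mtHom_inl]
          exact (memZ_iff ρ).1 hz a
        · simp only [MonoidHom.comp_apply, MulEquiv.coe_toMonoidHom, MulAut.conj_apply,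
            htoA, mtHom_gen]
          exact hzc
      have := congrArg (fun f : MappingTorusGroup Γ φ →* G => f x) key
      simpa using this
    -- the two quotient maps
    refine ⟨⟨Quot.lift (fun σ => Quot.mk rB (toB σ))
        (fun σ₁ σ₂ h => Quot.sound (respB σ₁ σ₂ h)),
      Quot.lift (fun c => Quot.mk rA (toA c))
        (fun c₁ c₂ h => Quot.sound (respA c₁ c₂ h)), ?_, ?_⟩⟩
    · -- left inverse : toA (toB σ) ~ σ
      intro q
      induction q using Quot.ind with
      | _ σ =>
        apply Quot.sound
        have hk := σ.2.choose_spec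
        set k := σ.2.choose
        refine ⟨k⁻¹, fun x => ?_⟩
        have key : (toA (toB σ)).1 = (MulAut.conj k).toMonoidHom.comp σ.1 := by
          apply mt_hom_ext
          · intro a
            simp only [MonoidHom.comp_apply, MulEquiv.coe_toMonoidHom, MulAut.conj_apply,
              htoA, mtHom_inl]
            exact (hk a).symm
          · simp only [MonoidHom.comp_apply, MulEquiv.coe_toMonoidHom, MulAut.conj_apply,
              htoA, mtHom_gen]
            rfl
        rw [key]
        simp only [MonoidHom.comp_apply, MulEquiv.coe_toMonoidHom, MulAut.conj_apply]
        group
    · -- right inverse : toB (toA c) ~ c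
      intro q
      induction q using Quot.ind with
      | _ c =>
        apply Quot.sound
        have hk := (toA c).2.choose_spec
        set k := (toA c).2.choose
        have hkZ : k ∈ Z := by
          apply (memZ_iff ρ).2
          intro a
          have := hk a
          simpa [htoA] using this
        refine ⟨k⁻¹, Z.inv_mem hkZ, ?_⟩
        show k⁻¹ * (k * (toA c).1 (mtGen Γ φ) * k⁻¹) * (k⁻¹)⁻¹ = c.1
        have : (toA c).1 (mtGen Γ φ) = c.1 := by simp [htoA]
        rw [this]; group
end

section
/- Let Γ and G be groups, φ : Γ → Γ a group automorphism, and let Γ ⋊_φ ℤ denote the semidirect product of Γ by ℤ with respect to the homomorphism ℤ → Aut(Γ) sending 1 to φ; write γ = (1, 1) ∈ Γ ⋊_φ ℤ for the canonical generator, so that γ α γ⁻¹ = φ(α) for all α ∈ Γ. Let ρ : Γ → G be a homomorphism such that the centralizer in G of ρ(Γ) equals the center Z(G) of G, and suppose there exists g ∈ G with g ρ(α) g⁻¹ = ρ(φ(α)) for all α ∈ Γ. Then the set of G-conjugacy classes of homomorphisms ρ̃ : Γ ⋊_φ ℤ → G whose restriction to Γ is G-conjugate to ρ is in bijection with the center Z(G).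 -/
section Aux

variable {Γ G : Type*} [Group Γ] [Group G]

/-- If `h` intertwines `ρ` and `ρ ∘ φ`, then `h^n` intertwines `ρ` and `ρ ∘ φ^n`. -/
lemma key_pow (φ : MulAut Γ) (ρ : Γ →* G) (h : G)
    (hh : ∀ a : Γ, h * ρ a * h⁻¹ = ρ (φ a)) :
    ∀ n : ℤ, ∀ a : Γ, ρ ((φ ^ n) a) = h ^ n * ρ a * (h ^ n)⁻¹ := by
  have hinv : ∀ a : Γ, ρ (φ⁻¹ a) = h⁻¹ * ρ a * h := by
    intro a
    have := hh (φ⁻¹ a)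
    rw [MulAut.apply_inv_self] at this
    rw [← this]; group
  intro n
  induction n using Int.induction_on with
  | zero => simp
  | succ n ih =>
      intro a
      have h1 : (φ ^ ((n : ℤ) + 1)) a = φ ((φ ^ (n : ℤ)) a) := by
        rw [add_comm, zpow_add, zpow_one]; rfl
      rw [h1, ← hh, ih]
      group
  | pred n ih =>
      intro a
      have h1 : (φ ^ (-(n : ℤ) - 1)) a = φ⁻¹ ((φ ^ (-(n : ℤ))) a) := by
        rw [sub_eq_add_neg, add_comm, zpow_add, zpow_neg, zpow_one]; rfl
      rw [h1, hinv, ih]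
      group

/-- Build a homomorphism on the mapping torus group from `ρ` and an intertwiner `h`. -/
noncomputable def mtLift (φ : MulAut Γ) (ρ : Γ →* G) (h : G)
    (hh : ∀ a : Γ, h * ρ a * h⁻¹ = ρ (φ a)) : MappingTorusGroup Γ φ →* G :=
  SemidirectProduct.lift ρ (zpowersHom G h) (by
    intro m
    ext a
    simp only [MonoidHom.comp_apply, MulEquiv.coe_toMonoidHom, zpowersHom_apply,
      ← map_zpow, MulAut.conj_apply]
    exact key_pow φ ρ h hh (Multiplicative.toAdd m) a)

@[simp] lemma mtLift_inl (φ : MulAut Γ) (ρ : Γ →* G) (h : G)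
    (hh : ∀ a : Γ, h * ρ a * h⁻¹ = ρ (φ a)) (a : Γ) :
    mtLift φ ρ h hh (SemidirectProduct.inl a) = ρ a := by
  simp [mtLift]

@[simp] lemma mtLift_gen (φ : MulAut Γ) (ρ : Γ →* G) (h : G)
    (hh : ∀ a : Γ, h * ρ a * h⁻¹ = ρ (φ a)) :
    mtLift φ ρ h hh (mtGen Γ φ) = h := by
  simp [mtLift, mtGen]

end Aux

/-- Section 7 of the paper, the generic case: if the centralizer of `ρ(Γ)` equals the center
`Z(G)` and there is `g` with `g ρ(α) g⁻¹ = ρ(φ α)` for all `α`, then the set of `G`-conjugacy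
classes of homomorphisms `Γ ⋊_φ ℤ → G` whose restriction to `Γ` is `G`-conjugate to `ρ` is in
bijection with the center `Z(G)`. -/
theorem fiber_of_restriction_equiv_center {Γ G : Type*} [Group Γ] [Group G]
    (φ : MulAut Γ) (ρ : Γ →* G)
    (hρ : Subgroup.centralizer (Set.range ρ) = Subgroup.center G)
    (g : G) (hg : ∀ a : Γ, g * ρ a * g⁻¹ = ρ (φ a)) :
    Nonempty
      (Quot (fun σ₁ σ₂ : {σ : MappingTorusGroup Γ φ →* G //
            ∃ k : G, ∀ a : Γ, k * σ (SemidirectProduct.inl a) * k⁻¹ = ρ a} =>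
          ∃ h : G, ∀ x : MappingTorusGroup Γ φ, h * σ₁.1 x * h⁻¹ = σ₂.1 x)
        ≃ Subgroup.center G) := by
  classical
  set r : {σ : MappingTorusGroup Γ φ →* G //
      ∃ k : G, ∀ a : Γ, k * σ (SemidirectProduct.inl a) * k⁻¹ = ρ a} →
      {σ : MappingTorusGroup Γ φ →* G //
      ∃ k : G, ∀ a : Γ, k * σ (SemidirectProduct.inl a) * k⁻¹ = ρ a} → Prop :=
    fun σ₁ σ₂ => ∃ h : G, ∀ x : MappingTorusGroup Γ φ, h * σ₁.1 x * h⁻¹ = σ₂.1 x with hr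
  have hrequiv : Equivalence r := by
    constructor
    · intro σ; exact ⟨1, fun x => by group⟩
    · rintro σ₁ σ₂ ⟨h, hh⟩
      exact ⟨h⁻¹, fun x => by rw [← hh x]; group⟩
    · rintro σ₁ σ₂ σ₃ ⟨h, hh⟩ ⟨h', hh'⟩
      exact ⟨h' * h, fun x => by rw [← hh' x, ← hh x]; group⟩
  -- central elements give intertwiners
  have hcent : ∀ z : Subgroup.center G, ∀ a : Γ,
      (z.1 * g) * ρ a * (z.1 * g)⁻¹ = ρ (φ a) := by
    intro z a
    have hz := z.2
    rw [Subgroup.mem_center_iff] at hz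
    have h1 : z.1 * g * ρ a * (z.1 * g)⁻¹ = z.1 * (g * ρ a * g⁻¹) * z.1⁻¹ := by group
    have h2 : z.1 * (g * ρ a * g⁻¹) * z.1⁻¹ = g * ρ a * g⁻¹ := by
      rw [← hz (g * ρ a * g⁻¹)]; group
    rw [h1, h2, hg]
  -- the map from the center
  let F : Subgroup.center G → Quot r := fun z =>
    Quot.mk r ⟨mtLift φ ρ (z.1 * g) (hcent z), 1, fun a => by simp⟩
  have hFinj : Function.Injective F := by
    intro z₁ z₂ hz
    have := Quot.eqvGen_exact hz
    rw [hrequiv.eqvGen_iff] at this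
    obtain ⟨h, hh⟩ := this
    -- h centralizes ρ(Γ)
    have hcentral : h ∈ Subgroup.center G := by
      rw [← hρ, Subgroup.mem_centralizer_iff]
      rintro b ⟨a, rfl⟩
      have := hh (SemidirectProduct.inl a)
      simp only [mtLift_inl] at this
      conv_lhs => rw [← this]
      group
    have hgen := hh (mtGen Γ φ)
    simp only [mtLift_gen] at hgen
    rw [Subgroup.mem_center_iff] at hcentral
    have : z₁.1 * g = z₂.1 * g := by
      calc z₁.1 * g = h * (z₁.1 * g) * h⁻¹ := by
            rw [← hcentral (z₁.1 * g)]; group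
        _ = z₂.1 * g := hgen
    exact Subtype.ext (mul_right_cancel this)
  have hFsurj : Function.Surjective F := by
    intro q
    induction q using Quot.ind with
    | _ σ =>
      obtain ⟨σ, k, hk⟩ := σ
      -- conjugated hom σ' = conj k ∘ σ restricts to ρ on Γ
      set h₀ : G := k * σ (mtGen Γ φ) * k⁻¹ with hh₀
      have hint : ∀ a : Γ, h₀ * ρ a * h₀⁻¹ = ρ (φ a) := by
        intro a
        have haut : (SemidirectProduct.inl (φ a) : MappingTorusGroup Γ φ) =
            mtGen Γ φ * SemidirectProduct.inl a * (mtGen Γ φ)⁻¹ := by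
          have := SemidirectProduct.inl_aut (φ := zpowersHom (MulAut Γ) φ)
            (Multiplicative.ofAdd (1 : ℤ)) a
          simpa using this
        have : k * σ (SemidirectProduct.inl (φ a)) * k⁻¹ = ρ (φ a) := hk (φ a)
        rw [haut] at this
        simp only [map_mul, map_inv] at this
        rw [← this, ← hk a, hh₀]
        group
      -- z = h₀ * g⁻¹ is central
      have hzc : h₀ * g⁻¹ ∈ Subgroup.center G := by
        rw [← hρ, Subgroup.mem_centralizer_iff]
        rintro b ⟨a, rfl⟩
        have h1 : h₀ * g⁻¹ * ρ a * (h₀ * g⁻¹)⁻¹ = ρ a := by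
          have hga : g⁻¹ * ρ a * g = ρ (φ⁻¹ a) := by
            have := hg (φ⁻¹ a)
            rw [MulAut.apply_inv_self] at this
            rw [← this]; group
          calc h₀ * g⁻¹ * ρ a * (h₀ * g⁻¹)⁻¹
              = h₀ * (g⁻¹ * ρ a * g) * h₀⁻¹ := by group
            _ = h₀ * ρ (φ⁻¹ a) * h₀⁻¹ := by rw [hga]
            _ = ρ (φ (φ⁻¹ a)) := hint (φ⁻¹ a)
            _ = ρ a := by rw [MulAut.apply_inv_self]
        calc ρ a * (h₀ * g⁻¹)
            = (h₀ * g⁻¹ * ρ a * (h₀ * g⁻¹)⁻¹) * (h₀ * g⁻¹) := by rw [h1]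
          _ = (h₀ * g⁻¹) * ρ a := by group
      refine ⟨⟨h₀ * g⁻¹, hzc⟩, ?_⟩
      apply Quot.sound
      -- relation between mtLift and σ via k⁻¹
      refine ⟨k⁻¹, ?_⟩
      have heq : mtLift φ ρ (h₀ * g⁻¹ * g) (hcent ⟨h₀ * g⁻¹, hzc⟩) =
          ((MulAut.conj k).toMonoidHom.comp σ) := by
        apply SemidirectProduct.hom_ext
        · ext a
          simp only [MonoidHom.comp_apply, MulEquiv.coe_toMonoidHom, MulAut.conj_apply]
          rw [mtLift_inl]
          exact (hk a).symm
        · apply MonoidHom.ext_mint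
          simp only [MonoidHom.comp_apply, MulEquiv.coe_toMonoidHom, MulAut.conj_apply]
          rw [show ((SemidirectProduct.inr (Multiplicative.ofAdd (1:ℤ))) :
              MappingTorusGroup Γ φ) = mtGen Γ φ from rfl]
          rw [mtLift_gen, hh₀]
          group
      intro x
      have := DFunLike.congr_fun heq x
      simp only [MonoidHom.comp_apply, MulEquiv.coe_toMonoidHom, MulAut.conj_apply] at this
      rw [this]; group
  exact ⟨(Equiv.ofBijective F ⟨hFinj, hFsurj⟩).symm⟩
end

section
/- Let N be a positive integer and let H be any subgroup of the special unitary group SU(N) of N×N complex matrices. Let Z(H) denote the centralizer of H in SU(N) and Z the center of SU(N) (which is contained in Z(H)). Then the quotient topological group Z(H)/Z is connected, where SU(N) carries its topology as a subgroup of the complex N×N matrices and the quotient carries the quotient topology. -/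
section AuxCFC
open scoped Matrix.Norms.L2Operator
open Matrix Complex Topology

variable {n : Type*} [Fintype n] [DecidableEq n]

noncomputable local instance : CStarAlgebra (Matrix n n ℂ) := Matrix.instCStarAlgebra

-- any function is continuous on a finite set
lemma continuousOn_of_finite {α β : Type*} [TopologicalSpace α] [TopologicalSpace β] [T1Space α]
    {s : Set α} (hs : s.Finite) (f : α → β) : ContinuousOn f s := by
  rw [continuousOn_iff_continuous_restrict]
  have : Finite s := hs
  exact continuous_of_discreteTopology

-- spectrum ℂ of hermitian matrix
lemma herm_spectrum (A : Matrix n n ℂ) (hA : A.IsHermitian) :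
    spectrum ℂ A = Set.range (fun j => (hA.eigenvalues j : ℂ)) := by
  conv_lhs => rw [hA.spectral_theorem, Unitary.conjStarAlgAut_apply, Unitary.spectrum_star_right_conjugate, spectrum_diagonal]
  ext z; simp [Function.comp]

namespace MyAux
variable {A : Matrix n n ℂ} (hA : A.IsHermitian)

/-- complex-valued functional calculus hom for a hermitian matrix -/
noncomputable def psi : C(spectrum ℂ A, ℂ) →⋆ₐ[ℂ] (Matrix n n ℂ) where
  toFun := fun g => (hA.eigenvectorUnitary : Matrix n n ℂ) *
    diagonal (g ∘ (fun i ↦ ⟨(hA.eigenvalues i : ℂ), by rw [herm_spectrum A hA]; exact ⟨i, rfl⟩⟩))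
    * star (hA.eigenvectorUnitary : Matrix n n ℂ)
  map_one' := by simp [Pi.one_def (M := fun _ : n ↦ ℂ)]
  map_mul' f g := by
    have {a b c d e f : Matrix n n ℂ} : (a * b * c) * (d * e * f) = a * (b * (c * d) * e) * f := by
      simp only [mul_assoc]
    simp only [this, ContinuousMap.coe_mul, SetLike.coe_mem, Unitary.star_mul_self_of_mem, mul_one,
      diagonal_mul_diagonal, Function.comp_apply]
    congr! with i
  map_zero' := by simp [Pi.zero_def (M := fun _ : n ↦ ℂ)]
  map_add' f g := by
    simp only [ContinuousMap.coe_add, ← add_mul, ← mul_add, diagonal_add, Function.comp_apply]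
    congr! with i
  commutes' r := by
    have h1 : ((algebraMap ℂ C(spectrum ℂ A, ℂ) r) ∘
        (fun i ↦ (⟨(hA.eigenvalues i : ℂ), by rw [herm_spectrum A hA]; exact ⟨i, rfl⟩⟩ :
          spectrum ℂ A))) = algebraMap ℂ (n → ℂ) r := rfl
    rw [h1, ← Matrix.algebraMap_eq_diagonal, ← Algebra.commutes r
      (hA.eigenvectorUnitary : Matrix n n ℂ), mul_assoc]
    rw [Unitary.mul_star_self_of_mem (SetLike.coe_mem hA.eigenvectorUnitary), mul_one]
  map_star' f := by
    simp only [star_trivial, StarMul.star_mul, star_star, star_eq_conjTranspose (diagonal _),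
      diagonal_conjTranspose, mul_assoc]
    congr!

end MyAux

namespace MyAux
variable {A : Matrix n n ℂ} (hA : A.IsHermitian)

lemma isClosedEmbedding_psi : IsClosedEmbedding (psi hA) := by
  have h0 : FiniteDimensional ℂ C(spectrum ℂ A, ℂ) :=
    FiniteDimensional.of_injective (ContinuousMap.coeFnLinearMap ℂ (M := ℂ)) DFunLike.coe_injective
  refine LinearMap.isClosedEmbedding_of_injective (𝕜 := ℂ) (E := C(spectrum ℂ A, ℂ))
    (F := Matrix n n ℂ) (f := psi hA) <| LinearMap.ker_eq_bot'.mpr fun f hf ↦ ?_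
  have h2 : diagonal (⇑f ∘ fun i ↦ (⟨(hA.eigenvalues i : ℂ),
        by rw [herm_spectrum A hA]; exact ⟨i, rfl⟩⟩ : spectrum ℂ A)) = (0 : Matrix n n ℂ) := by
    simp only [LinearMap.coe_coe] at hf
    replace hf : (hA.eigenvectorUnitary : Matrix n n ℂ) *
        diagonal (⇑f ∘ fun i ↦ (⟨(hA.eigenvalues i : ℂ),
          by rw [herm_spectrum A hA]; exact ⟨i, rfl⟩⟩ : spectrum ℂ A))
        * star (hA.eigenvectorUnitary : Matrix n n ℂ) = 0 := hf
    replace hf := congr($(hf) * (hA.eigenvectorUnitary : Matrix n n ℂ))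
    simp only [mul_assoc, SetLike.coe_mem, Unitary.star_mul_self_of_mem, mul_one, zero_mul] at hf
    simpa [← mul_assoc] using congr((star hA.eigenvectorUnitary : Matrix n n ℂ) * $(hf))
  ext x
  simp only [ContinuousMap.zero_apply]
  obtain ⟨x, hx⟩ := x
  rw [herm_spectrum A hA] at hx
  obtain ⟨i, rfl⟩ := hx
  rw [← diagonal_zero] at h2
  have := (diagonal_eq_diagonal_iff).mp h2
  exact this i

lemma psi_id : psi hA (ContinuousMap.restrict (spectrum ℂ A) (.id ℂ)) = A := by
  conv_rhs => rw [hA.spectral_theorem, Unitary.conjStarAlgAut_apply]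
  congr!

lemma cfc_herm (F : ℂ → ℂ) :
    cfc F A = (hA.eigenvectorUnitary : Matrix n n ℂ) *
      diagonal (fun i => F (hA.eigenvalues i)) * star (hA.eigenvectorUnitary : Matrix n n ℂ) := by
  have ha : IsStarNormal A := hA.isSelfAdjoint.isStarNormal
  have heq := cfcHom_eq_of_continuous_of_map_id ha (psi hA)
    (isClosedEmbedding_psi hA).continuous (psi_id hA)
  rw [cfc_apply F A ha (continuousOn_of_finite (A.finite_spectrum) F), heq]
  rfl

end MyAux

lemma isClosed_centralizer' {M : Type*} [TopologicalSpace M] [Mul M] [T2Space M]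
    [ContinuousMul M] (s : Set M) : IsClosed (Set.centralizer s) := by
  have : Set.centralizer s = ⋂ m ∈ s, {z | m * z = z * m} := by
    ext z; simp [Set.mem_centralizer_iff]
  rw [this]
  exact isClosed_biInter fun m _ =>
    isClosed_eq (continuous_const.mul continuous_id) (continuous_id.mul continuous_const)

lemma commute_cfc' (U : Matrix n n ℂ) (hU : IsStarNormal U) (x : Matrix n n ℂ)
    (h1 : Commute x U) (h2 : Commute x (star U)) (f : ℂ → ℂ) : Commute x (cfc f U) := by
  have hmem : cfc f U ∈ StarAlgebra.elemental ℂ U := by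
    rw [cfc_apply f U hU (continuousOn_of_finite (U.finite_spectrum) f),
      cfcHom_eq_of_isStarNormal]
    exact Subtype.coe_prop _
  have hle : StarAlgebra.elemental ℂ U ≤ StarSubalgebra.centralizer ℂ {x} := by
    refine StarAlgebra.elemental.le_of_mem ?_ ?_
    · rw [StarSubalgebra.coe_centralizer]
      exact isClosed_centralizer' _
    · rw [StarSubalgebra.mem_centralizer_iff]
      rintro g rfl
      have h3 := congrArg star h2.eq
      rw [StarMul.star_mul, StarMul.star_mul, star_star] at h3
      exact ⟨h1.eq, h3.symm⟩
  have := (StarSubalgebra.mem_centralizer_iff ℂ).mp (hle hmem) x rfl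
  exact this.1

theorem unitary_exists_diag (U : Matrix n n ℂ) (hU : U ∈ unitary (Matrix n n ℂ)) :
    ∃ (V : Matrix n n ℂ) (d : n → ℝ), V ∈ unitary (Matrix n n ℂ) ∧
      U = V * diagonal (fun j => Complex.exp ((d j : ℂ) * Complex.I)) * star V ∧
      ∀ (f : ℝ → ℂ) (x : Matrix n n ℂ), Commute x U →
        Commute x (V * diagonal (fun j => f (d j)) * star V) := by
  have hUn : IsStarNormal U :=
    ⟨by rw [Commute, SemiconjBy, Unitary.star_mul_self_of_mem hU,
      Unitary.mul_star_self_of_mem hU]⟩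
  set g : ℂ → ℂ := fun z => (Complex.arg z : ℂ) with hg
  set A := cfc g U with hAdef
  have hAsa : _root_.IsSelfAdjoint A := by
    rw [isSelfAdjoint_iff, hAdef]
    have hgs : g = (fun z => star (g z)) := funext fun z => (Complex.conj_ofReal _).symm
    conv_rhs => rw [hgs]
    exact (cfc_star g U).symm
  have hA : A.IsHermitian := hAsa
  refine ⟨hA.eigenvectorUnitary, hA.eigenvalues, SetLike.coe_mem _, ?_, ?_⟩
  · have h1 : U = cfc (fun z : ℂ => Complex.exp (g z * Complex.I)) U := by
      conv_lhs => rw [← cfc_id ℂ U hUn]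
      refine cfc_congr fun z hz => ?_
      have hz1 : ‖z‖ = 1 := by
        have := spectrum.subset_circle_of_unitary hU hz
        simpa using this
      simp only [hg, id_eq]
      conv_lhs => rw [← Complex.norm_mul_exp_arg_mul_I z]
      rw [hz1, Complex.ofReal_one, one_mul]
    have h2 : cfc (fun z : ℂ => Complex.exp (g z * Complex.I)) U
        = cfc (fun z : ℂ => Complex.exp (z * Complex.I)) A := by
      rw [hAdef, ← cfc_comp' (fun z : ℂ => Complex.exp (z * Complex.I)) g U
        (continuousOn_of_finite (U.finite_spectrum.image g) _)
        (continuousOn_of_finite (U.finite_spectrum) g)]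
    rw [h1, h2, MyAux.cfc_herm hA]
  · intro f x hx
    have hx' : Commute x (star U) := by
      have hsU : star U * U = 1 := Unitary.star_mul_self_of_mem hU
      have hUs : U * star U = 1 := Unitary.mul_star_self_of_mem hU
      rw [Commute, SemiconjBy]
      calc x * star U = star U * U * x * star U := by rw [hsU, one_mul]
        _ = star U * (x * U) * star U := by rw [mul_assoc (star U) U x, ← hx.eq]
        _ = star U * x * (U * star U) := by rw [mul_assoc, mul_assoc, mul_assoc]
        _ = star U * x := by rw [hUs, mul_one]
    have hcA : Commute x A := commute_cfc' U hUn x hx hx' g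
    have key : (hA.eigenvectorUnitary : Matrix n n ℂ) *
        diagonal (fun j => f (hA.eigenvalues j)) * star (hA.eigenvectorUnitary : Matrix n n ℂ)
        = cfc (fun z : ℂ => f z.re) A := by
      have hre : (fun j => f (hA.eigenvalues j))
          = (fun j => f ((hA.eigenvalues j : ℂ).re)) :=
        funext fun j => by rw [Complex.ofReal_re]
      rw [MyAux.cfc_herm hA, ← hre]
    rw [key]
    exact commute_cfc' A hAsa.isStarNormal x hcA (by rwa [hAsa.star_eq]) _


end AuxCFC

section MainAux
open Matrix Complex

variable {n : Type*} [Fintype n] [DecidableEq n]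

lemma diag_exp_unitary (V : Matrix n n ℂ) (hV : V ∈ unitary (Matrix n n ℂ)) (e : n → ℝ) :
    (V * diagonal (fun j => Complex.exp ((e j : ℂ) * Complex.I)) * star V)
      ∈ unitary (Matrix n n ℂ) := by
  rw [Matrix.mem_unitaryGroup_iff]
  have hstar : star (V * diagonal (fun j => Complex.exp ((e j : ℂ) * Complex.I)) * star V)
      = V * diagonal (fun j => star (Complex.exp ((e j : ℂ) * Complex.I))) * star V := by
    rw [StarMul.star_mul, StarMul.star_mul, star_star, Matrix.star_eq_conjTranspose (M := diagonal _),
      Matrix.diagonal_conjTranspose, mul_assoc]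
    rfl
  have hcan : ∀ x : Matrix n n ℂ, star V * (V * x) = x := fun x => by
    rw [← mul_assoc, Unitary.star_mul_self_of_mem hV, one_mul]
  rw [hstar]
  simp only [mul_assoc]
  rw [hcan, ← mul_assoc (diagonal _) (diagonal _), diagonal_mul_diagonal]
  have h1 : (fun j => Complex.exp ((e j : ℂ) * Complex.I)
      * star (Complex.exp ((e j : ℂ) * Complex.I))) = fun _ => (1 : ℂ) := by
    funext j
    rw [RCLike.star_def, ← Complex.exp_conj, _root_.map_mul, Complex.conj_ofReal, Complex.conj_I,
      mul_neg, ← Complex.exp_add, add_neg_cancel, Complex.exp_zero]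
  rw [h1, diagonal_one, one_mul, Unitary.mul_star_self_of_mem hV]

lemma diag_exp_det (V : Matrix n n ℂ) (hV : V ∈ unitary (Matrix n n ℂ)) (e : n → ℝ) :
    (V * diagonal (fun j => Complex.exp ((e j : ℂ) * Complex.I)) * star V).det
      = Complex.exp ((↑(∑ j, e j) : ℂ) * Complex.I) := by
  rw [Matrix.det_mul, Matrix.det_mul, Matrix.det_diagonal]
  have hVdet : V.det * (star V).det = 1 := by
    rw [← Matrix.det_mul, Unitary.mul_star_self_of_mem hV, Matrix.det_one]
  calc (V.det * ∏ j, Complex.exp ((e j : ℂ) * Complex.I)) * (star V).det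
      = (V.det * (star V).det) * ∏ j, Complex.exp ((e j : ℂ) * Complex.I) := by ring
    _ = ∏ j, Complex.exp ((e j : ℂ) * Complex.I) := by rw [hVdet, one_mul]
    _ = Complex.exp (∑ j, (e j : ℂ) * Complex.I) := (Complex.exp_sum _ _).symm
    _ = Complex.exp ((↑(∑ j, e j) : ℂ) * Complex.I) := by
        rw [← Finset.sum_mul]
        norm_cast

end MainAux

/-- The special unitary group `SU(N)`, as the subgroup of the unitary group
`U(N)` of `N × N` complex matrices consisting of the matrices of determinant one. -/
def SUgroup (N : ℕ) : Subgroup (Matrix.unitaryGroup (Fin N) ℂ) where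
  carrier := {A | Matrix.det (A : Matrix (Fin N) (Fin N) ℂ) = 1}
  one_mem' := by simp
  mul_mem' := by
    intro a b ha hb
    simp only [Set.mem_setOf_eq] at *
    rw [Submonoid.coe_mul, Matrix.det_mul, ha, hb, one_mul]
  inv_mem' := by
    intro x hx
    simp only [Set.mem_setOf_eq] at *
    have h : ((x⁻¹ * x : Matrix.unitaryGroup (Fin N) ℂ) : Matrix (Fin N) (Fin N) ℂ)
        = (1 : Matrix (Fin N) (Fin N) ℂ) := by
      rw [inv_mul_cancel]; rfl
    have h2 := congrArg Matrix.det h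
    rw [Submonoid.coe_mul, Matrix.det_mul, hx, mul_one, Matrix.det_one] at h2
    exact h2

section MainProof
open Matrix Complex

/-- Proposition `conn` of the paper: for every subgroup `H` of `SU(N)`, the quotient of the
centralizer `Z(H)` of `H` in `SU(N)` by the center `Z` of `SU(N)` is a connected topological
space (with the matrix topology on `SU(N)` and the quotient topology on `Z(H)/Z`). -/
theorem centralizer_mod_center_connected (N : ℕ) (hN : 0 < N) (H : Subgroup ↥(SUgroup N)) :
    ConnectedSpace
      (↥(Subgroup.centralizer (H : Set ↥(SUgroup N))) ⧸
        (Subgroup.center ↥(SUgroup N)).subgroupOf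
          (Subgroup.centralizer (H : Set ↥(SUgroup N)))) := by
  set G := ↥(SUgroup N) with hG
  set C := Subgroup.centralizer (H : Set G) with hC
  set K := (Subgroup.center G).subgroupOf C with hK
  have key : ∀ u : C, Joined (QuotientGroup.mk (1 : C) : C ⧸ K) (QuotientGroup.mk u) := by
    intro u
    -- the underlying unitary matrix
    set U : Matrix (Fin N) (Fin N) ℂ :=
      (((u : G) : Matrix.unitaryGroup (Fin N) ℂ) : Matrix (Fin N) (Fin N) ℂ) with hUdef
    have hU : U ∈ unitary (Matrix (Fin N) (Fin N) ℂ) := SetLike.coe_mem _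
    have hdet : U.det = 1 := (u : G).2
    obtain ⟨V, d, hV, hUeq, hcommKey⟩ := unitary_exists_diag U hU
    set c : ℝ := (∑ j, d j) / N with hc
    -- the path of matrices
    set γ : ℝ → Matrix (Fin N) (Fin N) ℂ := fun t =>
      V * diagonal (fun j => Complex.exp ((↑(t * (d j - c)) : ℂ) * Complex.I)) * star V with hγ
    have hsum : ∀ t : ℝ, (∑ j, t * (d j - c)) = 0 := by
      intro t
      rw [← Finset.mul_sum, Finset.sum_sub_distrib, Finset.sum_const, Finset.card_univ,
        Fintype.card_fin, hc, nsmul_eq_mul, mul_div_cancel₀]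
      · ring
      · exact_mod_cast hN.ne'
    have hmem : ∀ t : ℝ, γ t ∈ unitary (Matrix (Fin N) (Fin N) ℂ) := fun t =>
      diag_exp_unitary V hV _
    have hdet1 : ∀ t : ℝ, (γ t).det = 1 := by
      intro t
      rw [hγ]
      rw [diag_exp_det V hV (fun j => t * (d j - c)), hsum t]
      simp
    have hcommH : ∀ t : ℝ, ∀ x : Matrix (Fin N) (Fin N) ℂ, Commute x U → Commute x (γ t) := by
      intro t x hx
      exact hcommKey (fun r => Complex.exp ((↑(t * (r - c)) : ℂ) * Complex.I)) x hx
    -- matrices of elements of H commute with U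
    have hmat : ∀ g : G, g ∈ H →
        Commute ((g : Matrix.unitaryGroup (Fin N) ℂ) : Matrix (Fin N) (Fin N) ℂ) U := by
      intro g hg
      have h1 : g * (u : G) = (u : G) * g := Subgroup.mem_centralizer_iff.mp u.2 g hg
      have h2 := congrArg (fun z : G => ((z : Matrix.unitaryGroup (Fin N) ℂ) :
        Matrix (Fin N) (Fin N) ℂ)) h1
      exact h2
    -- the path inside the centralizer subgroup
    set γC : ℝ → ↥C := fun t => ⟨⟨⟨γ t, hmem t⟩, hdet1 t⟩, by
      rw [hC, Subgroup.mem_centralizer_iff]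
      intro g hg
      exact Subtype.ext (Subtype.ext ((hcommH t _ (hmat g hg)).eq))⟩ with hγC
    have hγC0 : γC 0 = 1 := by
      apply Subtype.ext; apply Subtype.ext; apply Subtype.ext
      show γ 0 = 1
      simp only [hγ]
      have : (fun j : Fin N => Complex.exp ((↑((0:ℝ) * (d j - c)) : ℂ) * Complex.I))
          = fun _ => (1 : ℂ) := by
        funext j; simp
      rw [this, diagonal_one, mul_one, Unitary.mul_star_self_of_mem hV]
    have hγ1 : γ 1 = Complex.exp (-(↑c) * Complex.I) • U := by
      simp only [hγ]
      rw [hUeq]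
      have : (fun j : Fin N => Complex.exp ((↑((1:ℝ) * (d j - c)) : ℂ) * Complex.I))
          = fun j => Complex.exp (-(↑c) * Complex.I) * Complex.exp ((↑(d j) : ℂ) * Complex.I) := by
        funext j
        rw [← Complex.exp_add]
        congr 1
        push_cast
        ring
      rw [this]
      have hdiag : diagonal (fun j => Complex.exp (-(↑c) * Complex.I)
          * Complex.exp ((↑(d j) : ℂ) * Complex.I))
          = Complex.exp (-(↑c) * Complex.I) • diagonal (fun j => Complex.exp ((↑(d j) : ℂ)
            * Complex.I)) := by
        rw [← diagonal_smul]
        rfl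
      rw [hdiag, mul_smul_comm, smul_mul_assoc]
    -- the quotient classes of γC 1 and u agree
    have hquot : (QuotientGroup.mk (γC 1) : C ⧸ K) = QuotientGroup.mk u := by
      rw [QuotientGroup.eq, hK, Subgroup.mem_subgroupOf]
      rw [Subgroup.mem_center_iff]
      intro g
      apply Subtype.ext; apply Subtype.ext
      show ((g : Matrix.unitaryGroup (Fin N) ℂ) : Matrix (Fin N) (Fin N) ℂ)
          * ((((γC 1)⁻¹ * u : ↥C) : G) : Matrix.unitaryGroup (Fin N) ℂ)
          = ((((γC 1)⁻¹ * u : ↥C) : G) : Matrix.unitaryGroup (Fin N) ℂ)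
          * ((g : Matrix.unitaryGroup (Fin N) ℂ) : Matrix (Fin N) (Fin N) ℂ)
      have hval : ((((γC 1)⁻¹ * u : ↥C) : G) : Matrix.unitaryGroup (Fin N) ℂ)
          = (starRingEnd ℂ) (Complex.exp (-(↑c) * Complex.I)) • (1 : Matrix (Fin N) (Fin N) ℂ) := by
        calc ((((γC 1)⁻¹ * u : ↥C) : G) : Matrix.unitaryGroup (Fin N) ℂ)
            = star (γ 1) * U := rfl
          _ = (starRingEnd ℂ) (Complex.exp (-(↑c) * Complex.I)) • (star U * U) := by
              rw [hγ1, star_smul, smul_mul_assoc, RCLike.star_def]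
          _ = (starRingEnd ℂ) (Complex.exp (-(↑c) * Complex.I)) • 1 := by
              rw [Unitary.star_mul_self_of_mem hU]
      rw [hval]
      rw [Matrix.mul_smul, Matrix.smul_mul, mul_one, one_mul]
    -- continuity of the path
    have hcont : Continuous fun t : unitInterval => γC (t : ℝ) := by
      apply Continuous.subtype_mk
      apply Continuous.subtype_mk
      apply Continuous.subtype_mk
      show Continuous fun t : unitInterval =>
        V * diagonal (fun j => Complex.exp ((↑((t : ℝ) * (d j - c)) : ℂ) * Complex.I)) * star V
      refine Continuous.matrix_mul (Continuous.matrix_mul continuous_const ?_) continuous_const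
      apply Continuous.matrix_diagonal
      apply continuous_pi
      intro j
      have : Continuous fun t : unitInterval => ((t : ℝ) * (d j - c)) := by fun_prop
      exact Complex.continuous_exp.comp ((Complex.continuous_ofReal.comp this).mul continuous_const)
    -- conclude
    have hpath : Joined (γC 0) (γC 1) :=
      ⟨{ toFun := fun t => γC (t : ℝ)
         continuous_toFun := hcont
         source' := by norm_num
         target' := by norm_num }⟩
    rw [hγC0] at hpath
    obtain ⟨p⟩ := hpath
    have : Joined (QuotientGroup.mk (1 : ↥C) : C ⧸ K) (QuotientGroup.mk (γC 1)) :=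
      ⟨p.map continuous_quot_mk⟩
    rwa [hquot] at this
  have hpc : PathConnectedSpace (↥C ⧸ K) := by
    refine ⟨⟨QuotientGroup.mk 1⟩, fun x y => ?_⟩
    obtain ⟨a, rfl⟩ := QuotientGroup.mk_surjective x
    obtain ⟨b, rfl⟩ := QuotientGroup.mk_surjective y
    exact (key a).symm.trans (key b)
  exact hpc.connectedSpace
end MainProof
end

section
/- Let n ≥ 0 be an integer, q₀, …, q_n pairwise distinct real numbers in [0, 1), d₀, …, d_n real numbers, and b₀, …, b_n ∈ ℂ. Set D = max_j d_j. If the function F(k) = ∑_{j=0}^n exp(2πi·k·q_j) · k^{d_j} · b_j (k ranging over the positive integers) satisfies F(k) = o(k^D) as k → ∞ (that is, F(k)/k^D → 0), then b_j = 0 for every index j with d_j = D. -/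
open Complex Filter Topology

private lemma norm_exp_two_pi_I (k : ℕ) (r : ℝ) :
    ‖Complex.exp (2 * Real.pi * Complex.I * (k : ℂ) * (r : ℂ))‖ = 1 := by
  have : (2 * Real.pi * Complex.I * (k : ℂ) * (r : ℂ)) =
      ((2 * Real.pi * k * r : ℝ) : ℂ) * Complex.I := by push_cast; ring
  rw [this, Complex.norm_exp_ofReal_mul_I]

private lemma geom_avg_zero {z : ℂ} (hz : ‖z‖ = 1) (hz1 : z ≠ 1) :
    Tendsto (fun N : ℕ => (∑ k ∈ Finset.range N, z ^ k) / (N : ℂ)) atTop (𝓝 0) := by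
  apply squeeze_zero_norm (fun N => ?_) (tendsto_const_div_atTop_nhds_zero_nat (2 / ‖z - 1‖))
  rw [norm_div, Complex.norm_natCast]
  gcongr
  rw [geom_sum_eq hz1, norm_div]
  gcongr
  calc ‖z ^ N - 1‖ ≤ ‖z ^ N‖ + ‖(1 : ℂ)‖ := norm_sub_le _ _
    _ = 2 := by rw [norm_pow, hz, one_pow, norm_one]; norm_num

/-- Leading-order extraction. -/
theorem leading_coeffs_vanish (n : ℕ) (q : Fin (n + 1) → ℝ) (hq_inj : Function.Injective q)
    (hq_mem : ∀ j, q j ∈ Set.Ico (0 : ℝ) 1) (d : Fin (n + 1) → ℝ) (b : Fin (n + 1) → ℂ)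
    (D : ℝ) (hD : IsGreatest (Set.range d) D)
    (h : Tendsto
      (fun k : ℕ =>
        (∑ j, Complex.exp (2 * Real.pi * Complex.I * (k : ℂ) * (q j : ℂ))
            * (((k : ℝ) ^ (d j) : ℝ) : ℂ) * b j) / (((k : ℝ) ^ D : ℝ) : ℂ))
      atTop (nhds 0)) :
    ∀ j, d j = D → b j = 0 := by
  intro i hdi
  set c : Fin (n + 1) → ℂ := fun j => if d j = D then b j else 0 with hc
  -- Step A: the leading part tends to 0.
  have hA : Tendsto
      (fun k : ℕ => ∑ j, Complex.exp (2 * Real.pi * Complex.I * (k : ℂ) * (q j : ℂ)) * c j)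
      atTop (𝓝 0) := by
    have hdiff : Tendsto
        (fun k : ℕ => ∑ j, (Complex.exp (2 * Real.pi * Complex.I * (k : ℂ) * (q j : ℂ)) * c j
          - Complex.exp (2 * Real.pi * Complex.I * (k : ℂ) * (q j : ℂ))
              * (((k : ℝ) ^ (d j) : ℝ) : ℂ) * b j / (((k : ℝ) ^ D : ℝ) : ℂ)))
        atTop (𝓝 0) := by
      have h0 : (0 : ℂ) = ∑ _j : Fin (n + 1), (0 : ℂ) := by simp
      rw [h0]
      apply tendsto_finset_sum
      intro j _
      by_cases hj : d j = D
      · apply Tendsto.congr' _ tendsto_const_nhds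
        filter_upwards [eventually_ge_atTop 1] with k hk
        have hk' : (0 : ℝ) < (k : ℝ) := by positivity
        have hne : (((k : ℝ) ^ D : ℝ) : ℂ) ≠ 0 := by
          simp only [ne_eq, Complex.ofReal_eq_zero]
          exact (Real.rpow_pos_of_pos hk' D).ne'
        simp only [hc, if_pos hj, hj]
        field_simp
        ring
      · have hjlt : d j < D := lt_of_le_of_ne (hD.2 ⟨j, rfl⟩) hj
        simp only [hc, if_neg hj, mul_zero, zero_sub]
        rw [show (0 : ℂ) = -0 by ring]
        apply Tendsto.neg
        have hbound : Tendsto (fun k : ℕ => (k : ℝ) ^ (d j - D) * ‖b j‖) atTop (𝓝 0) := by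
          have h1 := tendsto_rpow_neg_atTop (by linarith : (0:ℝ) < D - d j)
          simp only [neg_sub] at h1
          have := h1.comp tendsto_natCast_atTop_atTop
          simpa using this.mul_const ‖b j‖
        apply squeeze_zero_norm' _ hbound
        filter_upwards [eventually_ge_atTop 1] with k hk
        have hk' : (0 : ℝ) < (k : ℝ) := by positivity
        rw [norm_div, norm_mul, norm_mul, norm_exp_two_pi_I, one_mul,
          Complex.norm_real, Complex.norm_real,
          Real.norm_of_nonneg (Real.rpow_nonneg hk'.le _),
          Real.norm_of_nonneg (Real.rpow_nonneg hk'.le _),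
          Real.rpow_sub hk']
        ring_nf
        exact le_refl _
    have := hdiff.add h
    simp only [Finset.sum_sub_distrib, ← Finset.sum_div] at this
    simpa using this
  -- Step B: multiply by a unimodular factor and rewrite as powers.
  set z : Fin (n + 1) → ℂ := fun j => Complex.exp (2 * Real.pi * Complex.I * ((q j : ℂ) - (q i : ℂ)))
    with hzdef
  have hzj : ∀ j, z j = Complex.exp (2 * Real.pi * Complex.I * ((q j : ℂ) - (q i : ℂ))) :=
    fun j => rfl
  have hB : Tendsto (fun k : ℕ => ∑ j, (z j) ^ k * c j) atTop (𝓝 0) := by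
    have hmul : Tendsto
        (fun k : ℕ => Complex.exp (-(2 * Real.pi * Complex.I * (k : ℂ) * (q i : ℂ))) *
          ∑ j, Complex.exp (2 * Real.pi * Complex.I * (k : ℂ) * (q j : ℂ)) * c j)
        atTop (𝓝 0) := by
      rw [tendsto_zero_iff_norm_tendsto_zero]
      have : Tendsto
          (fun k : ℕ => ‖∑ j, Complex.exp (2 * Real.pi * Complex.I * (k : ℂ) * (q j : ℂ)) * c j‖)
          atTop (𝓝 0) := by
        have := hA.norm; simpa using this
      apply this.congr
      intro k
      have h1 : ‖Complex.exp (-(2 * Real.pi * Complex.I * (k : ℂ) * (q i : ℂ)))‖ = 1 := by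
        have he : (-(2 * Real.pi * Complex.I * (k : ℂ) * (q i : ℂ)))
            = 2 * Real.pi * Complex.I * (k : ℂ) * ((-(q i) : ℝ) : ℂ) := by push_cast; ring
        rw [he]; exact norm_exp_two_pi_I k (-(q i))
      rw [norm_mul, h1, one_mul]
    apply hmul.congr
    intro k
    rw [Finset.mul_sum]
    apply Finset.sum_congr rfl
    intro j _
    rw [← mul_assoc, ← Complex.exp_add, hzj j, ← Complex.exp_nat_mul]
    congr 1
    ring
  -- Step C: Cesàro averaging.
  have hC := hB.cesaro_smul
  have hC' : Tendsto
      (fun N : ℕ => ∑ j, ((∑ k ∈ Finset.range N, (z j) ^ k) / (N : ℂ)) * c j)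
      atTop (𝓝 0) := by
    apply hC.congr
    intro N
    rw [Finset.sum_comm, Complex.real_smul, Finset.mul_sum]
    apply Finset.sum_congr rfl
    intro j _
    rw [← Finset.sum_mul]
    push_cast
    ring
  -- The same sequence tends to c i.
  have hzi : z i = 1 := by
    rw [hzj]; simp
  have hCi : Tendsto
      (fun N : ℕ => ∑ j, ((∑ k ∈ Finset.range N, (z j) ^ k) / (N : ℂ)) * c j)
      atTop (𝓝 (c i)) := by
    have h0 : c i = ∑ j : Fin (n + 1), (if j = i then c i else 0) := by simp
    rw [h0]
    apply tendsto_finset_sum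
    intro j _
    by_cases hji : j = i
    · subst hji
      simp only [if_pos rfl, hzi, one_pow]
      apply Tendsto.congr' _ tendsto_const_nhds
      filter_upwards [eventually_ge_atTop 1] with N hN
      have : (N : ℂ) ≠ 0 := by
        simp only [ne_eq, Nat.cast_eq_zero]; omega
      rw [Finset.sum_const, Finset.card_range, nsmul_eq_mul, mul_one, div_self this, one_mul]
      simp
    · simp only [if_neg hji]
      have hnorm : ‖z j‖ = 1 := by
        rw [hzj]
        have : (2 * Real.pi * Complex.I * ((q j : ℂ) - (q i : ℂ)))
            = 2 * Real.pi * Complex.I * ((1 : ℕ) : ℂ) * ((q j - q i : ℝ) : ℂ) := by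
          push_cast; ring
        rw [this]
        exact norm_exp_two_pi_I 1 (q j - q i)
      have hne1 : z j ≠ 1 := by
        rw [hzj]
        intro hcon
        rw [Complex.exp_eq_one_iff] at hcon
        obtain ⟨m, hm⟩ := hcon
        have hI : (2 * Real.pi * Complex.I : ℂ) ≠ 0 := by
          simp [Real.pi_ne_zero, Complex.I_ne_zero]
        have hqm : ((q j : ℂ) - (q i : ℂ)) = (m : ℂ) := by
          have : (2 * Real.pi * Complex.I : ℂ) * ((q j : ℂ) - (q i : ℂ))
              = (2 * Real.pi * Complex.I : ℂ) * (m : ℂ) := by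
            rw [hm]; ring
          exact mul_left_cancel₀ hI this
        have hqm' : (q j : ℝ) - q i = (m : ℝ) := by
          have := congrArg Complex.re hqm
          simpa using this
        have hj1 : q j - q i < 1 := by
          have := (hq_mem j).2; have := (hq_mem i).1; linarith
        have hj2 : -1 < q j - q i := by
          have := (hq_mem j).1; have := (hq_mem i).2; linarith
        have hm0 : m = 0 := by
          rw [hqm'] at hj1 hj2
          have : (-1 : ℤ) < m := by exact_mod_cast hj2
          have : m < 1 := by exact_mod_cast hj1
          omega
        rw [hm0] at hqm'
        simp at hqm'
        exact hji (hq_inj (by linarith))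
      have := (geom_avg_zero hnorm hne1).mul_const (c j)
      simpa using this
  have : c i = 0 := tendsto_nhds_unique hCi hC'
  rw [hc] at this
  simpa [hdi] using this
end

section
/- Let Z : ℕ → ℂ be a function. Suppose there are two data sets (n; q₀ < q₁ < ⋯ < q_n in [0,1); d₀, …, d_n ∈ ℝ; nonzero b₀, …, b_n ∈ ℂ; a_j^l ∈ ℂ for 0 ≤ j ≤ n, l ≥ 1) and (n'; q'₀ < ⋯ < q'_{n'} in [0,1); d'_j ∈ ℝ; nonzero b'_j ∈ ℂ; a'^l_j ∈ ℂ), each of which gives an asymptotic expansion of Z in the Poincaré sense: for every nonnegative integer L there exists c_L ∈ ℝ such that |Z(k) − ∑_{j=0}^n e^{2πikq_j} k^{d_j} b_j (1 + ∑_{l=1}^L a_j^l k^{−l/2})| ≤ c_L · k^{d−(L+1)/2} for all positive integers k, where d = max_j d_j (and similarly for the primed data with d' = max_j d'_j). Then n = n', and for all j and l: q_j = q'_j, d_j = d'_j, b_j = b'_j, and a_j^l = a'^l_j. -/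
open Complex

/-- The statement that the data `(q, d, b, a)` gives an asymptotic expansion, in the Poincaré
sense, of the function `Z`: for every `L` there is `c_L` with
`|Z(k) - ∑_j e^{2πikq_j} k^{d_j} b_j (1 + ∑_{l=1}^L a_j^l k^{-l/2})| ≤ c_L k^{D-(L+1)/2}`
for all positive integers `k`, where `D = max_j d_j`. -/
def IsAsymptoticExpansion (Z : ℕ → ℂ) (n : ℕ) (q d : Fin (n + 1) → ℝ)
    (b : Fin (n + 1) → ℂ) (a : Fin (n + 1) → ℕ → ℂ) (D : ℝ) : Prop :=
  ∀ L : ℕ, ∃ c : ℝ, ∀ k : ℕ, 0 < k →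
    ‖Z k - ∑ j, Complex.exp (2 * Real.pi * Complex.I * (k : ℂ) * (q j : ℂ))
        * (((k : ℝ) ^ (d j) : ℝ) : ℂ) * b j
        * (1 + ∑ l ∈ Finset.Icc 1 L, a j l * (((k : ℝ) ^ (-(l : ℝ) / 2) : ℝ) : ℂ))‖
      ≤ c * ((k : ℝ) ^ (D - ((L : ℝ) + 1) / 2))

open Complex Filter Finset Topology


/-- A single power term `γ k^e` with `e ≤ 0` tends to `γ` if `e = 0`, else to `0`. -/
lemma term_tendsto (γ : ℂ) (e : ℝ) (he : e ≤ 0) :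
    Tendsto (fun k : ℕ => γ * (((k : ℝ) ^ e : ℝ) : ℂ)) atTop (𝓝 (if e = 0 then γ else 0)) := by
  rcases he.lt_or_eq with h0 | h0
  · rw [if_neg h0.ne]
    have h1 : Tendsto (fun k : ℕ => ((k : ℝ) ^ e)) atTop (𝓝 0) := by
      have := (tendsto_rpow_neg_atTop (y := -e) (by linarith)).comp
        (tendsto_natCast_atTop_atTop (R := ℝ))
      simpa [Function.comp_def] using this
    have h2 : Tendsto (fun k : ℕ => (((k : ℝ) ^ e : ℝ) : ℂ)) atTop (𝓝 0) := by
      have := (Complex.continuous_ofReal.tendsto 0).comp h1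
      simpa [Function.comp_def] using this
    simpa using h2.const_mul γ
  · subst h0  -- wrong direction? h0 : e = 0
    simp [Real.rpow_zero]

/-- Power terms with nonpositive exponent are slowly varying. -/
lemma term_slow (γ : ℂ) (e : ℝ) (he : e ≤ 0) (r : ℕ) :
    Tendsto (fun k : ℕ => γ * ((((k + r : ℕ) : ℝ) ^ e : ℝ) : ℂ)
      - γ * (((k : ℝ) ^ e : ℝ) : ℂ)) atTop (𝓝 0) := by
  have hA := (term_tendsto γ e he).comp (tendsto_add_atTop_nat r)
  have := hA.sub (term_tendsto γ e he)
  simpa using this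

/-- Separation of exponentials lemma: if `∑ i, z i ^ k * h i k → 0` with the `z i` distinct
unimodular numbers and the `h i` slowly varying, then every `h i → 0`. -/
lemma separation {ι : Type*} [Fintype ι] (z : ι → ℂ) (hz : Function.Injective z)
    (hz1 : ∀ i, ‖z i‖ = 1) (h : ι → ℕ → ℂ)
    (hslow : ∀ i (r : ℕ), Tendsto (fun k => h i (k + r) - h i k) atTop (𝓝 0))
    (hsum : Tendsto (fun k => ∑ i, z i ^ k * h i k) atTop (𝓝 0)) (i : ι) :
    Tendsto (h i) atTop (𝓝 0) := by
  classical
  set m := Fintype.card ι with hm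
  set e : ι ≃ Fin m := Fintype.equivFin ι with he
  set w : Fin m → ℂ := fun s => z (e.symm s) with hw
  set M := (Matrix.vandermonde w).transpose with hM
  have hdet : IsUnit M.det := by
    rw [hM, Matrix.det_transpose, Matrix.det_vandermonde]
    rw [isUnit_iff_ne_zero]
    apply Finset.prod_ne_zero_iff.2
    intro s _
    apply Finset.prod_ne_zero_iff.2
    intro u hu
    have : s ≠ u := by
      intro hsu; subst hsu; exact absurd (Finset.mem_Ioi.1 hu) (lt_irrefl _)
    exact sub_ne_zero.2 fun hww => this (e.symm.injective (hz hww)).symm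
  set W : ℕ → Fin m → ℂ := fun k s => z (e.symm s) ^ k * h (e.symm s) k with hW
  have key : ∀ r : Fin m, Tendsto (fun k => (M.mulVec (W k)) r) atTop (𝓝 0) := by
    intro r
    have heq : (fun k => (M.mulVec (W k)) r) =
        fun k => (∑ s : Fin m, z (e.symm s) ^ (k + (r : ℕ)) * h (e.symm s) (k + (r : ℕ))) -
          ∑ s : Fin m, z (e.symm s) ^ (k + (r : ℕ)) *
            (h (e.symm s) (k + (r : ℕ)) - h (e.symm s) k) := by
      funext k
      rw [← Finset.sum_sub_distrib]
      simp only [Matrix.mulVec, dotProduct, hM, Matrix.transpose_apply,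
        Matrix.vandermonde, Matrix.of_apply, hW, hw]
      apply Finset.sum_congr rfl
      intro s _
      rw [pow_add]
      ring
    rw [heq]
    have hA : Tendsto (fun k => ∑ s : Fin m, z (e.symm s) ^ (k + (r : ℕ)) *
        h (e.symm s) (k + (r : ℕ))) atTop (𝓝 0) := by
      have h2 : Tendsto (fun k => ∑ i : ι, z i ^ (k + (r : ℕ)) * h i (k + (r : ℕ)))
          atTop (𝓝 0) := hsum.comp (tendsto_add_atTop_nat r)
      have h3 : ∀ k : ℕ, ∑ s : Fin m, z (e.symm s) ^ (k + (r : ℕ)) * h (e.symm s) (k + (r : ℕ))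
          = ∑ i : ι, z i ^ (k + (r : ℕ)) * h i (k + (r : ℕ)) := fun k =>
        Equiv.sum_comp e.symm (fun i => z i ^ (k + (r : ℕ)) * h i (k + (r : ℕ)))
      simpa only [h3] using h2
    have hB : Tendsto (fun k => ∑ s : Fin m, z (e.symm s) ^ (k + (r : ℕ)) *
        (h (e.symm s) (k + (r : ℕ)) - h (e.symm s) k)) atTop (𝓝 0) := by
      have : (0 : ℂ) = ∑ _s : Fin m, (0 : ℂ) := by simp
      rw [this]
      apply tendsto_finset_sum
      intro s _
      rw [tendsto_zero_iff_norm_tendsto_zero]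
      have hnorm : ∀ k : ℕ, ‖z (e.symm s) ^ (k + (r : ℕ)) *
          (h (e.symm s) (k + (r : ℕ)) - h (e.symm s) k)‖
          = ‖h (e.symm s) (k + (r : ℕ)) - h (e.symm s) k‖ := by
        intro k
        rw [norm_mul, norm_pow, hz1, one_pow, one_mul]
      simp only [hnorm]
      rw [← tendsto_zero_iff_norm_tendsto_zero]
      exact hslow _ r
    simpa using hA.sub hB
  have keyW : ∀ s : Fin m, Tendsto (fun k => W k s) atTop (𝓝 0) := by
    intro s
    have hWs : ∀ k, W k s = ∑ r : Fin m, M⁻¹ s r * (M.mulVec (W k)) r := by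
      intro k
      have h4 : M⁻¹.mulVec (M.mulVec (W k)) = W k := by
        rw [Matrix.mulVec_mulVec, Matrix.nonsing_inv_mul _ hdet, Matrix.one_mulVec]
      conv_lhs => rw [← h4]
      rfl
    simp only [hWs]
    have : (0 : ℂ) = ∑ r : Fin m, M⁻¹ s r * (0 : ℂ) := by simp
    rw [this]
    exact tendsto_finset_sum _ fun r _ => (key r).const_mul _
  have := keyW (e i)
  rw [tendsto_zero_iff_norm_tendsto_zero] at this ⊢
  have hWnorm : ∀ k, ‖W k (e i)‖ = ‖h i k‖ := by
    intro k
    rw [hW]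
    simp only [Equiv.symm_apply_apply]
    rw [norm_mul, norm_pow, hz1, one_pow, one_mul]
  simpa only [hWnorm] using this

lemma nat_half_inj {dj t : ℝ} {l l' : ℕ} (h : t = dj - l / 2) (h' : t = dj - l' / 2) :
    l = l' := by
  have : (l : ℝ) = l' := by linarith
  exact_mod_cast this

open scoped Classical in
/-- The coefficient of `k^t` in the formal expansion with phase `p`. -/
noncomputable def Cf {n : ℕ} (q d : Fin (n + 1) → ℝ) (b : Fin (n + 1) → ℂ)
    (a : Fin (n + 1) → ℕ → ℂ) (p t : ℝ) : ℂ :=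
  ∑ j, if q j = p then
    (if h : ∃ l : ℕ, t = d j - l / 2 then
      (if h.choose = 0 then b j else b j * a j h.choose) else 0)
  else 0

open scoped Classical in
lemma Cf_grid {n : ℕ} {q d : Fin (n + 1) → ℝ} {b : Fin (n + 1) → ℂ}
    {a : Fin (n + 1) → ℕ → ℂ} (hq : Function.Injective q) (j : Fin (n + 1)) (l : ℕ) :
    Cf q d b a (q j) (d j - l / 2) = if l = 0 then b j else b j * a j l := by
  rw [Cf, Finset.sum_eq_single_of_mem j (Finset.mem_univ j)]
  · have hex : ∃ l' : ℕ, d j - (l : ℝ) / 2 = d j - (l' : ℝ) / 2 := ⟨l, rfl⟩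
    rw [if_pos rfl, dif_pos hex]
    have : hex.choose = l := nat_half_inj hex.choose_spec rfl
    rw [this]
  · intro j' _ hne
    rw [if_neg (fun h => hne (hq h))]

open scoped Classical in
lemma Cf_ne_zero {n : ℕ} {q d : Fin (n + 1) → ℝ} {b : Fin (n + 1) → ℂ}
    {a : Fin (n + 1) → ℕ → ℂ} {p t : ℝ} (h : Cf q d b a p t ≠ 0) :
    ∃ (j : Fin (n + 1)) (l : ℕ), q j = p ∧ t = d j - l / 2 := by
  rw [Cf] at h
  obtain ⟨j, -, hj⟩ := Finset.exists_ne_zero_of_sum_ne_zero h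
  by_cases h1 : q j = p
  · rw [if_pos h1] at hj
    by_cases h2 : ∃ l : ℕ, t = d j - l / 2
    · exact ⟨j, h2.choose, h1, h2.choose_spec⟩
    · rw [dif_neg h2] at hj; exact absurd rfl hj
  · rw [if_neg h1] at hj; exact absurd rfl hj

open scoped Classical in
lemma trunc_eq_Cf {n : ℕ} (q d : Fin (n + 1) → ℝ) (b : Fin (n + 1) → ℂ)
    (a : Fin (n + 1) → ℕ → ℂ) (hq : Function.Injective q) (L : ℕ) (t e p : ℝ)
    (hL : ∀ j, d j - L / 2 < t) (hte : t ≤ e) :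
    (∑ j, if q j = p then
        (∑ l ∈ Finset.range (L + 1), if d j - l / 2 = e then
          (if l = 0 then b j else b j * a j l) else 0)
      else 0) = Cf q d b a p e := by
  rw [Cf]
  apply Finset.sum_congr rfl
  intro j _
  by_cases h1 : q j = p
  · rw [if_pos h1, if_pos h1]
    by_cases h2 : ∃ l : ℕ, e = d j - l / 2
    · rw [dif_pos h2]
      have hspec : e = d j - (h2.choose : ℝ) / 2 := h2.choose_spec
      have hl₀L : h2.choose < L := by
        have h3 := hL j
        have h4 : (h2.choose : ℝ) < L := by linarith
        exact_mod_cast h4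
      rw [Finset.sum_eq_single_of_mem h2.choose (Finset.mem_range.2 (by omega))]
      · rw [if_pos hspec.symm]
      · intro l _ hne
        exact if_neg fun hcon => hne (nat_half_inj hcon.symm hspec)
    · rw [dif_neg h2]
      exact Finset.sum_eq_zero fun l _ => if_neg fun hcon => h2 ⟨l, hcon.symm⟩
  · rw [if_neg h1, if_neg h1]

lemma expand_term (L k : ℕ) (hk : 0 < k) (dj : ℝ) (bj : ℂ) (aj : ℕ → ℂ) :
    (((k : ℝ) ^ dj : ℝ) : ℂ) * bj
      * (1 + ∑ l ∈ Finset.Icc 1 L, aj l * (((k : ℝ) ^ (-(l : ℝ) / 2) : ℝ) : ℂ))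
    = ∑ l ∈ Finset.range (L + 1),
        (if l = 0 then bj else bj * aj l) * (((k : ℝ) ^ (dj - (l : ℝ) / 2) : ℝ) : ℂ) := by
  have hk' : (0 : ℝ) < k := Nat.cast_pos.2 hk
  have hrange : Finset.range (L + 1) = insert 0 (Finset.Icc 1 L) := by
    ext x; simp only [Finset.mem_range, Finset.mem_insert, Finset.mem_Icc]; omega
  rw [hrange, Finset.sum_insert (by simp), if_pos rfl]
  rw [show (dj - ((0 : ℕ) : ℝ) / 2) = dj by norm_num]
  rw [mul_add, mul_one, Finset.mul_sum]
  congr 1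
  · ring
  · apply Finset.sum_congr rfl
    intro l hl
    have hl1 : l ≠ 0 := by have := Finset.mem_Icc.1 hl; omega
    rw [if_neg hl1, show dj - (l : ℝ) / 2 = dj + (-(l : ℝ) / 2) by ring,
      Real.rpow_add hk', Complex.ofReal_mul]
    ring

open scoped Classical in
lemma phase_group {n : ℕ} (q : Fin (n + 1) → ℝ) (P : Finset ℝ) (hP : ∀ j, q j ∈ P)
    (E : ℝ → ℂ) (T : Fin (n + 1) → ℂ) :
    ∑ j, E (q j) * T j = ∑ p ∈ P, E p * ∑ j, (if q j = p then T j else 0) := by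
  have h1 : ∀ p, E p * ∑ j, (if q j = p then T j else 0)
      = ∑ j, (if q j = p then E p * T j else 0) := by
    intro p
    rw [Finset.mul_sum]
    exact Finset.sum_congr rfl fun j _ => by rw [mul_ite, mul_zero]
  simp only [h1]
  rw [Finset.sum_comm]
  apply Finset.sum_congr rfl
  intro j _
  rw [Finset.sum_ite_eq P (q j) (fun p => E p * T j), if_pos (hP j)]

open scoped Classical in
lemma exp_group {n : ℕ} (q d : Fin (n + 1) → ℝ) (b : Fin (n + 1) → ℂ)
    (a : Fin (n + 1) → ℕ → ℂ) (L : ℕ) (p : ℝ) (E : Finset ℝ)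
    (hE : ∀ (j : Fin (n + 1)) (l : ℕ), l ∈ Finset.range (L + 1) → q j = p →
      d j - (l : ℝ) / 2 ∈ E) (x : ℝ → ℂ) :
    (∑ j, if q j = p then ∑ l ∈ Finset.range (L + 1),
        (if l = 0 then b j else b j * a j l) * x (d j - (l : ℝ) / 2) else 0)
    = ∑ e ∈ E, (∑ j, if q j = p then
        (∑ l ∈ Finset.range (L + 1), if d j - l / 2 = e then
          (if l = 0 then b j else b j * a j l) else 0)
      else 0) * x e := by
  symm
  calc ∑ e ∈ E, (∑ j, if q j = p then
        (∑ l ∈ Finset.range (L + 1), if d j - l / 2 = e then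
          (if l = 0 then b j else b j * a j l) else 0) else 0) * x e
      = ∑ e ∈ E, ∑ j, (if q j = p then
        (∑ l ∈ Finset.range (L + 1), if d j - l / 2 = e then
          (if l = 0 then b j else b j * a j l) else 0) else 0) * x e := by
        exact Finset.sum_congr rfl fun e _ => Finset.sum_mul ..
    _ = ∑ j, ∑ e ∈ E, (if q j = p then
        (∑ l ∈ Finset.range (L + 1), if d j - l / 2 = e then
          (if l = 0 then b j else b j * a j l) else 0) else 0) * x e := Finset.sum_comm
    _ = ∑ j, (if q j = p then ∑ l ∈ Finset.range (L + 1),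
        (if l = 0 then b j else b j * a j l) * x (d j - (l : ℝ) / 2) else 0) := by
        apply Finset.sum_congr rfl
        intro j _
        by_cases h : q j = p
        · simp only [if_pos h]
          calc ∑ e ∈ E, (∑ l ∈ Finset.range (L + 1), if d j - l / 2 = e then
                (if l = 0 then b j else b j * a j l) else 0) * x e
              = ∑ e ∈ E, ∑ l ∈ Finset.range (L + 1), (if d j - l / 2 = e then
                (if l = 0 then b j else b j * a j l) * x e else 0) := by
                apply Finset.sum_congr rfl
                intro e _
                rw [Finset.sum_mul]
                exact Finset.sum_congr rfl fun l _ => by rw [ite_mul, zero_mul]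
            _ = ∑ l ∈ Finset.range (L + 1), ∑ e ∈ E, (if d j - l / 2 = e then
                (if l = 0 then b j else b j * a j l) * x e else 0) := Finset.sum_comm
            _ = ∑ l ∈ Finset.range (L + 1),
                (if l = 0 then b j else b j * a j l) * x (d j - (l : ℝ) / 2) := by
                apply Finset.sum_congr rfl
                intro l hl
                rw [Finset.sum_ite_eq E (d j - (l : ℝ) / 2)
                  (fun e => (if l = 0 then b j else b j * a j l) * x e),
                  if_pos (hE j l hl h)]
        · simp only [if_neg h, zero_mul, Finset.sum_const_zero]

lemma exp_phase_abs (p : ℝ) : ‖Complex.exp (2 * ↑Real.pi * Complex.I * (p : ℂ))‖ = 1 := by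
  rw [Complex.norm_exp]
  have : (2 * ↑Real.pi * Complex.I * (p : ℂ)).re = 0 := by
    simp [Complex.mul_re, Complex.mul_im]
  rw [this, Real.exp_zero]

lemma exp_phase_inj {p₁ p₂ : ℝ} (h1 : p₁ ∈ Set.Ico (0 : ℝ) 1) (h2 : p₂ ∈ Set.Ico (0 : ℝ) 1)
    (h : Complex.exp (2 * ↑Real.pi * Complex.I * (p₁ : ℂ))
      = Complex.exp (2 * ↑Real.pi * Complex.I * (p₂ : ℂ))) : p₁ = p₂ := by
  rw [Complex.exp_eq_exp_iff_exists_int] at h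
  obtain ⟨m, hm⟩ := h
  have h2pi : (2 : ℂ) * ↑Real.pi * Complex.I ≠ 0 := by
    simp [Complex.ext_iff, Real.pi_ne_zero]
  have hc : (2 : ℂ) * ↑Real.pi * Complex.I * (p₁ : ℂ)
      = (2 : ℂ) * ↑Real.pi * Complex.I * ((p₂ : ℂ) + (m : ℂ)) := by
    rw [hm]; ring
  have hc2 : (p₁ : ℂ) = (p₂ : ℂ) + (m : ℂ) := mul_left_cancel₀ h2pi hc
  have hr : p₁ = p₂ + (m : ℝ) := by exact_mod_cast hc2
  have hm0 : m = 0 := by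
    have hb1 : (m : ℝ) < 1 := by
      have := h1.2; have := h2.1; linarith
    have hb2 : (-1 : ℝ) < m := by
      have := h1.1; have := h2.2; linarith
    have : m < 1 := by exact_mod_cast hb1
    have : -1 < m := by exact_mod_cast hb2
    omega
  rw [hr, hm0]; simp

lemma exp_phase_pow (p : ℝ) (k : ℕ) :
    Complex.exp (2 * ↑Real.pi * Complex.I * (p : ℂ)) ^ k
      = Complex.exp (2 * ↑Real.pi * Complex.I * (k : ℂ) * (p : ℂ)) := by
  rw [← Complex.exp_nat_mul]
  congr 1
  ring

lemma const_rpow_tendsto (c e : ℝ) (he : e < 0) :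
    Filter.Tendsto (fun k : ℕ => c * (k : ℝ) ^ e) Filter.atTop (𝓝 0) := by
  have h1 : Filter.Tendsto (fun k : ℕ => ((k : ℝ) ^ e)) Filter.atTop (𝓝 0) := by
    have := (tendsto_rpow_neg_atTop (y := -e) (by linarith)).comp
      (tendsto_natCast_atTop_atTop (R := ℝ))
    simpa [Function.comp_def] using this
  simpa using h1.const_mul c


set_option maxHeartbeats 2000000 in
/-- Uniqueness of asymptotic expansions (Section 1 of the paper): two asymptotic expansions in
the Poincaré sense of the same function `Z`, with strictly increasing phases in `[0,1)` and
nonzero leading coefficients, have the same number of terms and identical data. -/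
theorem asymptotic_expansion_unique (Z : ℕ → ℂ) (n n' : ℕ)
    (q : Fin (n + 1) → ℝ) (q' : Fin (n' + 1) → ℝ) (hq : StrictMono q) (hq' : StrictMono q')
    (hqm : ∀ j, q j ∈ Set.Ico (0 : ℝ) 1) (hq'm : ∀ j, q' j ∈ Set.Ico (0 : ℝ) 1)
    (d : Fin (n + 1) → ℝ) (d' : Fin (n' + 1) → ℝ)
    (b : Fin (n + 1) → ℂ) (b' : Fin (n' + 1) → ℂ)
    (hb : ∀ j, b j ≠ 0) (hb' : ∀ j, b' j ≠ 0)
    (a : Fin (n + 1) → ℕ → ℂ) (a' : Fin (n' + 1) → ℕ → ℂ)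
    (D D' : ℝ) (hD : IsGreatest (Set.range d) D) (hD' : IsGreatest (Set.range d') D')
    (h1 : IsAsymptoticExpansion Z n q d b a D)
    (h2 : IsAsymptoticExpansion Z n' q' d' b' a' D') :
    ∃ h : n = n', ∀ j : Fin (n + 1),
      q j = q' (Fin.cast (congrArg (· + 1) h) j)
      ∧ d j = d' (Fin.cast (congrArg (· + 1) h) j)
      ∧ b j = b' (Fin.cast (congrArg (· + 1) h) j)
      ∧ ∀ l : ℕ, 1 ≤ l → a j l = a' (Fin.cast (congrArg (· + 1) h) j) l := by
  classical
  have hqi : Function.Injective q := hq.injective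
  have hqi' : Function.Injective q' := hq'.injective
  set P : Finset ℝ := Finset.image q Finset.univ ∪ Finset.image q' Finset.univ with hPdef
  have hPq : ∀ j, q j ∈ P := fun j =>
    Finset.mem_union_left _ (Finset.mem_image_of_mem q (Finset.mem_univ j))
  have hPq' : ∀ j, q' j ∈ P := fun j =>
    Finset.mem_union_right _ (Finset.mem_image_of_mem q' (Finset.mem_univ j))
  have hPmem : ∀ p ∈ P, p ∈ Set.Ico (0 : ℝ) 1 := by
    intro p hp
    rcases Finset.mem_union.1 hp with hp | hp <;>
      obtain ⟨j, -, rfl⟩ := Finset.mem_image.1 hp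
    exacts [hqm j, hq'm j]
  obtain ⟨zf, hzf⟩ : ∃ zf : ℝ → ℂ,
      zf = fun p : ℝ => Complex.exp (2 * ↑Real.pi * Complex.I * (p : ℂ)) := ⟨_, rfl⟩
  have hzfpow : ∀ (p : ℝ) (k : ℕ),
      zf p ^ k = Complex.exp (2 * Real.pi * Complex.I * (k : ℂ) * (p : ℂ)) := by
    intro p k
    rw [hzf]
    exact exp_phase_pow p k
  have hzfabs : ∀ p : ℝ, ‖zf p‖ = 1 := by
    intro p
    rw [hzf]
    exact exp_phase_abs p
  have hzfinj : ∀ p₁ ∈ P, ∀ p₂ ∈ P, zf p₁ = zf p₂ → p₁ = p₂ := by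
    intro p₁ h₁ p₂ h₂ hz0
    simp only [hzf] at hz0
    exact exp_phase_inj (hPmem _ h₁) (hPmem _ h₂) hz0
  set M : ℝ := max D D' with hMdef
  have hdle : ∀ j, d j ≤ M := fun j => le_trans (hD.2 ⟨j, rfl⟩) (le_max_left _ _)
  have hdle' : ∀ j, d' j ≤ M := fun j => le_trans (hD'.2 ⟨j, rfl⟩) (le_max_right _ _)
  -- ====================== THE CORE ANALYTIC STEP ======================
  have core : ∀ t : ℝ, (∀ s : ℝ, t < s → ∀ p : ℝ, Cf q d b a p s = Cf q' d' b' a' p s) →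
      ∀ p : ℝ, Cf q d b a p t = Cf q' d' b' a' p t := by
    intro t habove p₀
    by_cases hp₀ : p₀ ∈ P
    case neg =>
      have z1 : Cf q d b a p₀ t = 0 := by
        by_contra hne
        obtain ⟨j, l, hj, -⟩ := Cf_ne_zero hne
        exact hp₀ (hj ▸ hPq j)
      have z2 : Cf q' d' b' a' p₀ t = 0 := by
        by_contra hne
        obtain ⟨j, l, hj, -⟩ := Cf_ne_zero hne
        exact hp₀ (hj ▸ hPq' j)
      rw [z1, z2]
    case pos =>
    set L : ℕ := ⌈2 * (M - t)⌉₊ + 1 with hLdef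
    have hLt : M - (L : ℝ) / 2 < t := by
      have h5 := Nat.le_ceil (2 * (M - t))
      have h6 : ((⌈2 * (M - t)⌉₊ : ℕ) : ℝ) + 1 = (L : ℝ) := by rw [hLdef]; push_cast; ring
      linarith
    have hLd : ∀ j, d j - (L : ℝ) / 2 < t := fun j => by have := hdle j; linarith
    have hLd' : ∀ j, d' j - (L : ℝ) / 2 < t := fun j => by have := hdle' j; linarith
    obtain ⟨c, hc⟩ := h1 L
    obtain ⟨c', hc'⟩ := h2 L
    -- exponent sets
    obtain ⟨Ep, hEpdef⟩ : ∃ Ep : ℝ → Finset ℝ, Ep = fun p => insert t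
      (((((Finset.univ : Finset (Fin (n + 1))) ×ˢ Finset.range (L + 1)).filter
          (fun jl => q jl.1 = p)).image (fun jl => d jl.1 - (jl.2 : ℝ) / 2))
        ∪ ((((Finset.univ : Finset (Fin (n' + 1))) ×ˢ Finset.range (L + 1)).filter
          (fun jl => q' jl.1 = p)).image (fun jl => d' jl.1 - (jl.2 : ℝ) / 2))) := ⟨_, rfl⟩
    have hEmem1 : ∀ p (j : Fin (n + 1)) (l : ℕ), l ∈ Finset.range (L + 1) → q j = p →
        d j - (l : ℝ) / 2 ∈ Ep p := by
      intro p j l hl hqj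
      rw [hEpdef]
      apply Finset.mem_insert_of_mem
      apply Finset.mem_union_left
      exact Finset.mem_image.2 ⟨(j, l), Finset.mem_filter.2
        ⟨Finset.mem_product.2 ⟨Finset.mem_univ _, hl⟩, hqj⟩, rfl⟩
    have hEmem2 : ∀ p (j : Fin (n' + 1)) (l : ℕ), l ∈ Finset.range (L + 1) → q' j = p →
        d' j - (l : ℝ) / 2 ∈ Ep p := by
      intro p j l hl hqj
      rw [hEpdef]
      apply Finset.mem_insert_of_mem
      apply Finset.mem_union_right
      exact Finset.mem_image.2 ⟨(j, l), Finset.mem_filter.2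
        ⟨Finset.mem_product.2 ⟨Finset.mem_univ _, hl⟩, hqj⟩, rfl⟩
    have htEp : ∀ p, t ∈ Ep p := fun p => by rw [hEpdef]; exact Finset.mem_insert_self _ _
    -- truncated coefficient differences
    obtain ⟨gA, hgAdef⟩ : ∃ gA : ℝ → ℝ → ℂ, gA = fun p e => ∑ j, if q j = p then
        (∑ l ∈ Finset.range (L + 1), if d j - l / 2 = e then
          (if l = 0 then b j else b j * a j l) else 0) else 0 := ⟨_, rfl⟩
    obtain ⟨gB, hgBdef⟩ : ∃ gB : ℝ → ℝ → ℂ, gB = fun p e => ∑ j, if q' j = p then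
        (∑ l ∈ Finset.range (L + 1), if d' j - l / 2 = e then
          (if l = 0 then b' j else b' j * a' j l) else 0) else 0 := ⟨_, rfl⟩
    obtain ⟨g, hgdef⟩ : ∃ g : ℝ → ℝ → ℂ, g = fun p e => gA p e - gB p e := ⟨_, rfl⟩
    have hgtrunc : ∀ p e, t ≤ e → g p e = Cf q d b a p e - Cf q' d' b' a' p e := by
      intro p e hte
      simp only [hgdef, hgAdef, hgBdef]
      rw [trunc_eq_Cf q d b a hqi L t e p hLd hte,
        trunc_eq_Cf q' d' b' a' hqi' L t e p hLd' hte]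
    have hgzero : ∀ p e, t < e → g p e = 0 := by
      intro p e hlt
      rw [hgtrunc p e hlt.le, habove e hlt p, sub_self]
    -- the slowly varying functions
    obtain ⟨hfun, hhfundef⟩ : ∃ hfun : ℝ → ℕ → ℂ, hfun = fun (p : ℝ) (k : ℕ) =>
      ∑ e ∈ (Ep p).filter (· ≤ t),
        g p e * (((k : ℝ) ^ (e - t) : ℝ) : ℂ) := ⟨_, rfl⟩
    -- the main identity
    have hiden : ∀ k : ℕ, 0 < k →
        (∑ j, Complex.exp (2 * Real.pi * Complex.I * (k : ℂ) * (q j : ℂ))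
          * (((k : ℝ) ^ (d j) : ℝ) : ℂ) * b j
          * (1 + ∑ l ∈ Finset.Icc 1 L, a j l * (((k : ℝ) ^ (-(l : ℝ) / 2) : ℝ) : ℂ)))
        - (∑ j, Complex.exp (2 * Real.pi * Complex.I * (k : ℂ) * (q' j : ℂ))
          * (((k : ℝ) ^ (d' j) : ℝ) : ℂ) * b' j
          * (1 + ∑ l ∈ Finset.Icc 1 L, a' j l * (((k : ℝ) ^ (-(l : ℝ) / 2) : ℝ) : ℂ)))
        = (((k : ℝ) ^ t : ℝ) : ℂ) * ∑ p ∈ P,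
            Complex.exp (2 * Real.pi * Complex.I * (k : ℂ) * (p : ℂ)) * hfun p k := by
      intro k hk
      have hk' : (0 : ℝ) < k := Nat.cast_pos.2 hk
      have stepA : (∑ j, Complex.exp (2 * Real.pi * Complex.I * (k : ℂ) * (q j : ℂ))
          * (((k : ℝ) ^ (d j) : ℝ) : ℂ) * b j
          * (1 + ∑ l ∈ Finset.Icc 1 L, a j l * (((k : ℝ) ^ (-(l : ℝ) / 2) : ℝ) : ℂ)))
          = ∑ p ∈ P, Complex.exp (2 * Real.pi * Complex.I * (k : ℂ) * (p : ℂ))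
            * ∑ e ∈ Ep p, gA p e * (((k : ℝ) ^ e : ℝ) : ℂ) := by
        have r1 : ∀ j : Fin (n + 1),
            Complex.exp (2 * Real.pi * Complex.I * (k : ℂ) * (q j : ℂ))
              * (((k : ℝ) ^ (d j) : ℝ) : ℂ) * b j
              * (1 + ∑ l ∈ Finset.Icc 1 L, a j l * (((k : ℝ) ^ (-(l : ℝ) / 2) : ℝ) : ℂ))
            = Complex.exp (2 * Real.pi * Complex.I * (k : ℂ) * (q j : ℂ))
              * ∑ l ∈ Finset.range (L + 1), (if l = 0 then b j else b j * a j l)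
                * (((k : ℝ) ^ (d j - (l : ℝ) / 2) : ℝ) : ℂ) := by
          intro j
          rw [← expand_term L k hk (d j) (b j) (a j)]
          ring
        rw [Finset.sum_congr rfl fun j _ => r1 j]
        rw [phase_group q P hPq
          (fun p => Complex.exp (2 * Real.pi * Complex.I * (k : ℂ) * (p : ℂ)))
          (fun j => ∑ l ∈ Finset.range (L + 1), (if l = 0 then b j else b j * a j l)
            * (((k : ℝ) ^ (d j - (l : ℝ) / 2) : ℝ) : ℂ))]
        apply Finset.sum_congr rfl
        intro p _
        congr 1
        simp only [hgAdef]
        exact exp_group q d b a L p (Ep p) (fun j l hl hqj => hEmem1 p j l hl hqj)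
          (fun e => (((k : ℝ) ^ e : ℝ) : ℂ))
      have stepB : (∑ j, Complex.exp (2 * Real.pi * Complex.I * (k : ℂ) * (q' j : ℂ))
          * (((k : ℝ) ^ (d' j) : ℝ) : ℂ) * b' j
          * (1 + ∑ l ∈ Finset.Icc 1 L, a' j l * (((k : ℝ) ^ (-(l : ℝ) / 2) : ℝ) : ℂ)))
          = ∑ p ∈ P, Complex.exp (2 * Real.pi * Complex.I * (k : ℂ) * (p : ℂ))
            * ∑ e ∈ Ep p, gB p e * (((k : ℝ) ^ e : ℝ) : ℂ) := by
        have r1 : ∀ j : Fin (n' + 1),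
            Complex.exp (2 * Real.pi * Complex.I * (k : ℂ) * (q' j : ℂ))
              * (((k : ℝ) ^ (d' j) : ℝ) : ℂ) * b' j
              * (1 + ∑ l ∈ Finset.Icc 1 L, a' j l * (((k : ℝ) ^ (-(l : ℝ) / 2) : ℝ) : ℂ))
            = Complex.exp (2 * Real.pi * Complex.I * (k : ℂ) * (q' j : ℂ))
              * ∑ l ∈ Finset.range (L + 1), (if l = 0 then b' j else b' j * a' j l)
                * (((k : ℝ) ^ (d' j - (l : ℝ) / 2) : ℝ) : ℂ) := by
          intro j
          rw [← expand_term L k hk (d' j) (b' j) (a' j)]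
          ring
        rw [Finset.sum_congr rfl fun j _ => r1 j]
        rw [phase_group q' P hPq'
          (fun p => Complex.exp (2 * Real.pi * Complex.I * (k : ℂ) * (p : ℂ)))
          (fun j => ∑ l ∈ Finset.range (L + 1), (if l = 0 then b' j else b' j * a' j l)
            * (((k : ℝ) ^ (d' j - (l : ℝ) / 2) : ℝ) : ℂ))]
        apply Finset.sum_congr rfl
        intro p _
        congr 1
        simp only [hgBdef]
        exact exp_group q' d' b' a' L p (Ep p) (fun j l hl hqj => hEmem2 p j l hl hqj)
          (fun e => (((k : ℝ) ^ e : ℝ) : ℂ))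
      rw [stepA, stepB, ← Finset.sum_sub_distrib, Finset.mul_sum]
      apply Finset.sum_congr rfl
      intro p _
      rw [← mul_sub, ← Finset.sum_sub_distrib]
      have inner1 : ∑ e ∈ Ep p, (gA p e * (((k : ℝ) ^ e : ℝ) : ℂ)
          - gB p e * (((k : ℝ) ^ e : ℝ) : ℂ))
          = ∑ e ∈ Ep p, g p e * (((k : ℝ) ^ e : ℝ) : ℂ) := by
        apply Finset.sum_congr rfl
        intro e _
        simp only [hgdef]
        ring
      rw [inner1]
      have inner2 : ∑ e ∈ Ep p, g p e * (((k : ℝ) ^ e : ℝ) : ℂ)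
          = ∑ e ∈ (Ep p).filter (· ≤ t), g p e * (((k : ℝ) ^ e : ℝ) : ℂ) := by
        symm
        apply Finset.sum_filter_of_ne
        intro e _ hne
        by_contra hgt
        exact hne (by rw [hgzero p e (not_le.1 hgt), zero_mul])
      rw [inner2]
      have inner3 : ∀ e ∈ (Ep p).filter (· ≤ t),
          g p e * (((k : ℝ) ^ e : ℝ) : ℂ)
          = (((k : ℝ) ^ t : ℝ) : ℂ) * (g p e * (((k : ℝ) ^ (e - t) : ℝ) : ℂ)) := by
        intro e _
        have h7 : t + (e - t) = e := by ring
        have h8 : (k : ℝ) ^ e = (k : ℝ) ^ t * (k : ℝ) ^ (e - t) := by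
          rw [← h7, Real.rpow_add hk']
          rw [h7]
        rw [h8, Complex.ofReal_mul]
        ring
      rw [Finset.sum_congr rfl inner3, ← Finset.mul_sum]
      simp only [hhfundef]
      ring
    -- the sum of exponentials tends to zero
    have hzero : Filter.Tendsto (fun k : ℕ => ∑ p ∈ P, zf p ^ k * hfun p k)
        Filter.atTop (𝓝 0) := by
      apply squeeze_zero_norm' (a := fun k : ℕ => c * (k : ℝ) ^ (D - ((L : ℝ) + 1) / 2 - t)
        + c' * (k : ℝ) ^ (D' - ((L : ℝ) + 1) / 2 - t))
      · filter_upwards [Filter.eventually_ge_atTop 1] with k hk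
        have hk0 : 0 < k := hk
        have hk' : (0 : ℝ) < k := Nat.cast_pos.2 hk0
        have hxt : (((k : ℝ) ^ t : ℝ) : ℂ) ≠ 0 := by
          simp only [ne_eq, Complex.ofReal_eq_zero]
          positivity
        have hsum_eq : ∑ p ∈ P, zf p ^ k * hfun p k
            = ∑ p ∈ P, Complex.exp (2 * Real.pi * Complex.I * (k : ℂ) * (p : ℂ)) * hfun p k := by
          apply Finset.sum_congr rfl
          intro p _
          rw [hzfpow]
        rw [hsum_eq]
        have hdiff := hiden k hk0
        have hineq : ‖(((k : ℝ) ^ t : ℝ) : ℂ) * ∑ p ∈ P,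
            Complex.exp (2 * Real.pi * Complex.I * (k : ℂ) * (p : ℂ)) * hfun p k‖
            ≤ c * (k : ℝ) ^ (D - ((L : ℝ) + 1) / 2) + c' * (k : ℝ) ^ (D' - ((L : ℝ) + 1) / 2) := by
          rw [← hdiff]
          have hb1 := hc k hk0
          have hb2 := hc' k hk0
          calc ‖(∑ j, Complex.exp (2 * Real.pi * Complex.I * (k : ℂ) * (q j : ℂ))
                * (((k : ℝ) ^ (d j) : ℝ) : ℂ) * b j
                * (1 + ∑ l ∈ Finset.Icc 1 L, a j l * (((k : ℝ) ^ (-(l : ℝ) / 2) : ℝ) : ℂ)))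
              - (∑ j, Complex.exp (2 * Real.pi * Complex.I * (k : ℂ) * (q' j : ℂ))
                * (((k : ℝ) ^ (d' j) : ℝ) : ℂ) * b' j
                * (1 + ∑ l ∈ Finset.Icc 1 L, a' j l * (((k : ℝ) ^ (-(l : ℝ) / 2) : ℝ) : ℂ)))‖
              = ‖(Z k - (∑ j, Complex.exp (2 * Real.pi * Complex.I * (k : ℂ) * (q' j : ℂ))
                * (((k : ℝ) ^ (d' j) : ℝ) : ℂ) * b' j
                * (1 + ∑ l ∈ Finset.Icc 1 L, a' j l * (((k : ℝ) ^ (-(l : ℝ) / 2) : ℝ) : ℂ))))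
                - (Z k - (∑ j, Complex.exp (2 * Real.pi * Complex.I * (k : ℂ) * (q j : ℂ))
                * (((k : ℝ) ^ (d j) : ℝ) : ℂ) * b j
                * (1 + ∑ l ∈ Finset.Icc 1 L, a j l * (((k : ℝ) ^ (-(l : ℝ) / 2) : ℝ) : ℂ))))‖ := by
                congr 1
                ring
            _ ≤ ‖Z k - (∑ j, Complex.exp (2 * Real.pi * Complex.I * (k : ℂ) * (q' j : ℂ))
                * (((k : ℝ) ^ (d' j) : ℝ) : ℂ) * b' j
                * (1 + ∑ l ∈ Finset.Icc 1 L, a' j l * (((k : ℝ) ^ (-(l : ℝ) / 2) : ℝ) : ℂ)))‖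
                + ‖Z k - (∑ j, Complex.exp (2 * Real.pi * Complex.I * (k : ℂ) * (q j : ℂ))
                * (((k : ℝ) ^ (d j) : ℝ) : ℂ) * b j
                * (1 + ∑ l ∈ Finset.Icc 1 L, a j l * (((k : ℝ) ^ (-(l : ℝ) / 2) : ℝ) : ℂ)))‖ :=
                norm_sub_le _ _
            _ ≤ c * (k : ℝ) ^ (D - ((L : ℝ) + 1) / 2)
                + c' * (k : ℝ) ^ (D' - ((L : ℝ) + 1) / 2) := by
                have := add_le_add hb2 hb1
                linarith
        rw [norm_mul] at hineq
        have hxtn : ‖(((k : ℝ) ^ t : ℝ) : ℂ)‖ = (k : ℝ) ^ t := by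
          rw [Complex.norm_real, Real.norm_of_nonneg (by positivity)]
        rw [hxtn] at hineq
        have hpos : (0 : ℝ) < (k : ℝ) ^ t := by positivity
        have h10 : c * (k : ℝ) ^ (D - ((L : ℝ) + 1) / 2 - t)
            + c' * (k : ℝ) ^ (D' - ((L : ℝ) + 1) / 2 - t)
            = (c * (k : ℝ) ^ (D - ((L : ℝ) + 1) / 2)
              + c' * (k : ℝ) ^ (D' - ((L : ℝ) + 1) / 2)) / (k : ℝ) ^ t := by
          rw [Real.rpow_sub hk' (D - ((L : ℝ) + 1) / 2) t,
            Real.rpow_sub hk' (D' - ((L : ℝ) + 1) / 2) t]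
          ring
        rw [h10, le_div_iff₀ hpos, mul_comm]
        exact hineq
      · have he1 : D - ((L : ℝ) + 1) / 2 - t < 0 := by
          have : D ≤ M := le_max_left _ _
          linarith
        have he2 : D' - ((L : ℝ) + 1) / 2 - t < 0 := by
          have : D' ≤ M := le_max_right _ _
          linarith
        have := (const_rpow_tendsto c _ he1).add (const_rpow_tendsto c' _ he2)
        simpa using this
    -- separation of phases
    have hsep : ∀ p ∈ P, Filter.Tendsto (hfun p) Filter.atTop (𝓝 0) := by
      intro p hp
      have hslowP : ∀ (i : {x // x ∈ P}) (r : ℕ), Filter.Tendsto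
          (fun k => hfun (i : ℝ) (k + r) - hfun (i : ℝ) k) Filter.atTop (𝓝 0) := by
        intro i r
        have heq2 : (fun k => hfun (i : ℝ) (k + r) - hfun (i : ℝ) k)
            = fun k => ∑ e ∈ (Ep (i : ℝ)).filter (· ≤ t),
              (g (i : ℝ) e * ((((k + r : ℕ) : ℝ) ^ (e - t) : ℝ) : ℂ)
               - g (i : ℝ) e * (((k : ℝ) ^ (e - t) : ℝ) : ℂ)) := by
          funext k
          simp only [hhfundef]
          rw [Finset.sum_sub_distrib]
        rw [heq2]
        have := tendsto_finset_sum ((Ep (i : ℝ)).filter (· ≤ t))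
          (f := fun e k => g (i : ℝ) e * ((((k + r : ℕ) : ℝ) ^ (e - t) : ℝ) : ℂ)
            - g (i : ℝ) e * (((k : ℝ) ^ (e - t) : ℝ) : ℂ)) (a := fun _ => 0)
          (fun e he => term_slow (g (i : ℝ) e) (e - t)
            (by have := (Finset.mem_filter.1 he).2; linarith) r)
        simpa using this
      have hsumP : Filter.Tendsto
          (fun k : ℕ => ∑ i : {x // x ∈ P}, zf (i : ℝ) ^ k * hfun (i : ℝ) k)
          Filter.atTop (𝓝 0) := by
        have hEq : ∀ k : ℕ, ∑ i : {x // x ∈ P}, zf (i : ℝ) ^ k * hfun (i : ℝ) k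
            = ∑ p ∈ P, zf p ^ k * hfun p k :=
          fun k => Finset.sum_coe_sort P (fun p => zf p ^ k * hfun p k)
        simp only [hEq]
        exact hzero
      exact separation (fun i : {x // x ∈ P} => zf (i : ℝ))
        (fun i₁ i₂ hz0 => Subtype.ext (hzfinj _ i₁.2 _ i₂.2 hz0))
        (fun i => hzfabs _) (fun i k => hfun (i : ℝ) k) hslowP hsumP ⟨p, hp⟩
    -- identify the limits
    have hlim : ∀ p ∈ P, Filter.Tendsto (hfun p) Filter.atTop
        (𝓝 (∑ e ∈ (Ep p).filter (· ≤ t), if e - t = 0 then g p e else 0)) := by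
      intro p hp
      simp only [hhfundef]
      apply tendsto_finset_sum
      intro e he
      exact term_tendsto (g p e) (e - t)
        (by have := (Finset.mem_filter.1 he).2; linarith)
    have hgt0 : ∀ p ∈ P, g p t = 0 := by
      intro p hp
      have huniq := tendsto_nhds_unique (hlim p hp) (hsep p hp)
      rw [Finset.sum_eq_single_of_mem (s := (Ep p).filter (· ≤ t))
        (f := fun e => if e - t = 0 then g p e else 0) t
        (Finset.mem_filter.2 ⟨htEp p, le_refl t⟩)] at huniq
      · rwa [if_pos (sub_self t)] at huniq
      · intro e _ hne
        exact if_neg (fun hc0 => hne (by linarith [sub_eq_zero.1 hc0]))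
    have h11 := hgt0 p₀ hp₀
    rw [hgtrunc p₀ t le_rfl] at h11
    exact sub_eq_zero.1 h11
  -- ====================== KEY: ALL COEFFICIENTS AGREE ======================
  have KEY : ∀ (p t : ℝ), Cf q d b a p t = Cf q' d' b' a' p t := by
    by_contra hcon
    push_neg at hcon
    obtain ⟨p₀, t₀, hne⟩ := hcon
    set N₀ : ℕ := ⌈2 * (M - t₀)⌉₊ with hN₀def
    set F : Finset ℝ := ((((Finset.univ : Finset (Fin (n + 1))) ×ˢ Finset.range (N₀ + 1)).image
        fun jl => d jl.1 - (jl.2 : ℝ) / 2)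
      ∪ (((Finset.univ : Finset (Fin (n' + 1))) ×ˢ Finset.range (N₀ + 1)).image
        fun jl => d' jl.1 - (jl.2 : ℝ) / 2)) with hFdef
    have hBgrid : ∀ t : ℝ, (∃ p, Cf q d b a p t ≠ Cf q' d' b' a' p t) → t₀ ≤ t → t ∈ F := by
      rintro t ⟨p, hp⟩ ht
      have hone : Cf q d b a p t ≠ 0 ∨ Cf q' d' b' a' p t ≠ 0 := by
        by_contra hno
        push_neg at hno
        exact hp (hno.1.trans hno.2.symm)
      rcases hone with hno | hno
      · obtain ⟨j, l, -, rfl⟩ := Cf_ne_zero hno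
        apply Finset.mem_union_left
        have hlN : l ≤ N₀ := by
          have h5 : (l : ℝ) ≤ 2 * (M - t₀) := by
            have := hdle j
            linarith
          have h6 := h5.trans (Nat.le_ceil (2 * (M - t₀)))
          exact_mod_cast h6
        exact Finset.mem_image.2 ⟨(j, l), Finset.mem_product.2
          ⟨Finset.mem_univ _, Finset.mem_range.2 (by omega)⟩, rfl⟩
      · obtain ⟨j, l, -, rfl⟩ := Cf_ne_zero hno
        apply Finset.mem_union_right
        have hlN : l ≤ N₀ := by
          have h5 : (l : ℝ) ≤ 2 * (M - t₀) := by
            have := hdle' j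
            linarith
          have h6 := h5.trans (Nat.le_ceil (2 * (M - t₀)))
          exact_mod_cast h6
        exact Finset.mem_image.2 ⟨(j, l), Finset.mem_product.2
          ⟨Finset.mem_univ _, Finset.mem_range.2 (by omega)⟩, rfl⟩
    set F' : Finset ℝ := F.filter
      (fun s => t₀ ≤ s ∧ ∃ p, Cf q d b a p s ≠ Cf q' d' b' a' p s) with hF'def
    have hF'ne : F'.Nonempty :=
      ⟨t₀, Finset.mem_filter.2 ⟨hBgrid t₀ ⟨p₀, hne⟩ le_rfl, le_rfl, p₀, hne⟩⟩
    set tstar : ℝ := F'.max' hF'ne with htsdef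
    have htstar := Finset.mem_filter.1 (F'.max'_mem hF'ne)
    obtain ⟨-, ht₀le, p₁, hp₁⟩ := htstar
    have habove : ∀ s : ℝ, tstar < s → ∀ p : ℝ, Cf q d b a p s = Cf q' d' b' a' p s := by
      intro s hs p
      by_contra hne2
      have hsF' : s ∈ F' := Finset.mem_filter.2
        ⟨hBgrid s ⟨p, hne2⟩ (le_trans ht₀le hs.le), le_trans ht₀le hs.le, p, hne2⟩
      exact absurd (F'.le_max' s hsF') (not_le.2 hs)
    exact hp₁ (core tstar habove p₁)
  -- ====================== EXTRACTION OF THE DATA ======================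
  have Cf_top : ∀ j, Cf q d b a (q j) (d j) = b j := by
    intro j
    have h5 := Cf_grid (d := d) (b := b) (a := a) hqi j 0
    simpa using h5
  have Cf_top' : ∀ j, Cf q' d' b' a' (q' j) (d' j) = b' j := by
    intro j
    have h5 := Cf_grid (d := d') (b := b') (a := a') hqi' j 0
    simpa using h5
  have hrange : Set.range q = Set.range q' := by
    ext x
    simp only [Set.mem_range]
    constructor
    · rintro ⟨j, rfl⟩
      have h5 : Cf q' d' b' a' (q j) (d j) ≠ 0 := by
        rw [← KEY, Cf_top]
        exact hb j
      obtain ⟨j', l, hj', -⟩ := Cf_ne_zero h5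
      exact ⟨j', hj'⟩
    · rintro ⟨j', rfl⟩
      have h5 : Cf q d b a (q' j') (d' j') ≠ 0 := by
        rw [KEY, Cf_top']
        exact hb' j'
      obtain ⟨j, l, hj, -⟩ := Cf_ne_zero h5
      exact ⟨j, hj⟩
  have hn : n = n' := by
    have himg : Finset.image q Finset.univ = Finset.image q' Finset.univ := by
      ext x
      simp only [Finset.mem_image, Finset.mem_univ, true_and]
      constructor
      · rintro ⟨j, rfl⟩
        have h7 : q j ∈ Set.range q' := by rw [← hrange]; exact ⟨j, rfl⟩
        obtain ⟨j', hj'⟩ := h7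
        exact ⟨j', hj'⟩
      · rintro ⟨j', rfl⟩
        have h7 : q' j' ∈ Set.range q := by rw [hrange]; exact ⟨j', rfl⟩
        obtain ⟨j, hj⟩ := h7
        exact ⟨j, hj⟩
    have hcard := congrArg Finset.card himg
    rw [Finset.card_image_of_injective _ hqi, Finset.card_image_of_injective _ hqi',
      Finset.card_univ, Finset.card_univ, Fintype.card_fin, Fintype.card_fin] at hcard
    omega
  subst hn
  refine ⟨rfl, ?_⟩
  have hwf : WellFoundedLT (Fin (n + 1)) := inferInstance
  have hqq : q = q' := (StrictMono.range_inj (β := Fin (n + 1)) (γ := ℝ) hq hq').1 hrange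
  intro j
  have hcast : Fin.cast (congrArg (· + 1) (rfl : n = n)) j = j := rfl
  rw [hcast]
  have hqj : q j = q' j := congrFun hqq j
  have hdj : d j = d' j := by
    by_contra hne
    rcases lt_or_gt_of_ne hne with hlt | hgt
    · have h5 : Cf q d b a (q j) (d' j) ≠ 0 := by
        rw [KEY, hqj, Cf_top']
        exact hb' j
      obtain ⟨j₀, l, hj₀, hgrid⟩ := Cf_ne_zero h5
      have hj₀j : j₀ = j := hqi hj₀
      subst hj₀j
      have hl0 : (0 : ℝ) ≤ (l : ℝ) / 2 := by positivity
      linarith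
    · have h5 : Cf q' d' b' a' (q' j) (d j) ≠ 0 := by
        rw [← KEY, ← hqj, Cf_top]
        exact hb j
      obtain ⟨j₀, l, hj₀, hgrid⟩ := Cf_ne_zero h5
      have hj₀j : j₀ = j := hqi' hj₀
      subst hj₀j
      have hl0 : (0 : ℝ) ≤ (l : ℝ) / 2 := by positivity
      linarith
  have hbj : b j = b' j := by
    have h5 := KEY (q j) (d j)
    rw [Cf_top] at h5
    rw [hqj, hdj, Cf_top'] at h5
    exact h5
  refine ⟨hqj, hdj, hbj, ?_⟩
  intro l hl
  have h6 := KEY (q j) (d j - (l : ℝ) / 2)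
  rw [Cf_grid hqi j l, if_neg (by omega : ¬ l = 0)] at h6
  rw [hqj, hdj, Cf_grid hqi' j l, if_neg (by omega : ¬ l = 0)] at h6
  rw [hbj] at h6
  exact mul_left_cancel₀ (hb' j) h6
end
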